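/- arXiv:1412.5418 — 3 statements merged into one kernel-verified Lean document; each statement's English description precedes it below -/
import Mathlib

section
/- Perron–Frobenius theorem: If A is an irreducible n×n nonnegative real matrix with n ≥ 2, then the spectral radius ρ(A) is strictly positive, ρ(A) is a simple eigenvalue of A, and A has an eigenvector with all entries strictly positive corresponding to ρ(A). -/
open Matrix Polynomial Finset
namespace PF
section Poly
variable {R : Type*} [CommRing R]

lemma eval_det_charmatrix {N : ℕ} (M : Matrix (Fin N) (Fin N) R) (t : R) :
    M.charpoly.eval t = (t • (1 : Matrix (Fin N) (Fin N) R) - M).det := by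
  rw [Matrix.charpoly, ← Polynomial.coe_evalRingHom, RingHom.map_det]
  congr 1
  ext i j
  by_cases h : i = j <;>
    simp [h, Matrix.charmatrix_apply, Matrix.one_apply, Matrix.diagonal_apply]

lemma derivative_finset_prod {ι : Type*} [DecidableEq ι] (s : Finset ι) (f : ι → R[X]) :
    derivative (∏ i ∈ s, f i) = ∑ i ∈ s, (∏ j ∈ s.erase i, f j) * derivative (f i) := by
  induction s using Finset.induction_on with
  | empty => simp
  | @insert a s ha ih =>
      rw [Finset.prod_insert ha, derivative_mul, ih, Finset.sum_insert ha,
        Finset.erase_insert ha, Finset.mul_sum]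
      rw [mul_comm (derivative (f a)) (∏ i ∈ s, f i)]
      congr 1
      exact Finset.sum_congr rfl fun i hi => by
        rw [Finset.erase_insert_of_ne (by rintro rfl; exact ha hi),
          Finset.prod_insert (fun h => ha (Finset.mem_of_mem_erase h)), mul_assoc]

lemma derivative_det {N : ℕ} (M : Matrix (Fin N) (Fin N) R[X]) :
    derivative M.det = ∑ i, (M.updateCol i (fun r => derivative (M r i))).det := by
  simp only [Matrix.det_apply']
  rw [derivative_sum]
  rw [Finset.sum_comm]
  refine Finset.sum_congr rfl fun σ _ => ?_
  have : ∀ c : ℤ, ∀ p : R[X], derivative ((c : R[X]) * p) = (c : R[X]) * derivative p := by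
    intro c p; rw [derivative_mul]; simp
  rw [this, derivative_finset_prod, Finset.mul_sum]
  refine Finset.sum_congr rfl fun i _ => ?_
  congr 1
  rw [← Finset.mul_prod_erase (univ) _ (Finset.mem_univ i),
    Matrix.updateCol_apply, if_pos rfl, mul_comm]
  congr 1
  refine Finset.prod_congr rfl fun j hj => ?_
  rw [Matrix.updateCol_apply, if_neg (Finset.ne_of_mem_erase hj)]

variable {R : Type*} [CommRing R]

lemma det_updateColumn_single {N : ℕ} (B : Matrix (Fin (N+1)) (Fin (N+1)) R) (i : Fin (N+1)) :
    (B.updateCol i (Pi.single i 1)).det = (B.submatrix i.succAbove i.succAbove).det := by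
  rw [Matrix.det_succ_column _ i]
  rw [Finset.sum_eq_single i]
  · rw [Matrix.updateCol_apply, if_pos rfl, Pi.single_eq_same]
    have : (-1 : R) ^ ((i : ℕ) + (i : ℕ)) = 1 := by
      rw [← two_mul, pow_mul]; norm_num
    rw [this, one_mul, one_mul]
    congr 1
    ext r c
    rw [Matrix.submatrix_apply, Matrix.submatrix_apply, Matrix.updateCol_apply,
      if_neg (Fin.succAbove_ne i c)]
  · intro b _ hb
    rw [Matrix.updateCol_apply, if_pos rfl, Pi.single_eq_of_ne hb]
    ring
  · intro h; exact absurd (Finset.mem_univ i) h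

lemma submatrix_smul_one_sub {N : ℕ} (M : Matrix (Fin (N+1)) (Fin (N+1)) R) (t : R)
    (i : Fin (N+1)) :
    (t • (1 : Matrix (Fin (N+1)) (Fin (N+1)) R) - M).submatrix i.succAbove i.succAbove =
      t • (1 : Matrix (Fin N) (Fin N) R) - M.submatrix i.succAbove i.succAbove := by
  ext r c
  simp only [Matrix.submatrix_apply, Matrix.sub_apply, Matrix.smul_apply, Matrix.one_apply,
    Fin.succAbove_right_injective.eq_iff]

lemma derivative_charpoly_eval {N : ℕ} (M : Matrix (Fin (N+1)) (Fin (N+1)) R) (t : R) :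
    (derivative M.charpoly).eval t =
      ∑ i : Fin (N+1), (t • (1 : Matrix (Fin N) (Fin N) R) - M.submatrix i.succAbove i.succAbove).det := by
  rw [Matrix.charpoly, derivative_det, eval_finset_sum]
  refine Finset.sum_congr rfl fun i _ => ?_
  rw [← Polynomial.coe_evalRingHom, RingHom.map_det, ← submatrix_smul_one_sub M t i,
    ← det_updateColumn_single]
  congr 1
  ext r c
  rw [RingHom.mapMatrix_apply, Matrix.map_apply]
  by_cases h : c = i
  · rw [Matrix.updateCol_apply, if_pos h, Matrix.updateCol_apply, if_pos h]
    by_cases hr : r = i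
    · subst hr
      simp [Matrix.charmatrix_apply_eq]
    · rw [Matrix.charmatrix_apply_ne _ _ _ hr, Pi.single_eq_of_ne hr]
      simp
  · rw [Matrix.updateCol_apply, if_neg h, Matrix.updateCol_apply, if_neg h]
    by_cases hr : r = c
    · subst hr
      simp [Matrix.charmatrix_apply_eq, Matrix.one_apply]
    · rw [Matrix.charmatrix_apply_ne _ _ _ hr]
      simp [Matrix.one_apply, hr]

end Poly

section Comb

lemma esc {n : ℕ} (A : Matrix (Fin n) (Fin n) ℝ)
    (hirr : ¬ ∃ k : ℕ, 0 < k ∧ k < n ∧ ∃ σ : Equiv.Perm (Fin n),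
      ∀ i j : Fin n, k ≤ (i : ℕ) → (j : ℕ) < k → A (σ i) (σ j) = 0)
    (S : Finset (Fin n)) (h1 : S.Nonempty) (h2 : S ≠ univ) :
    ∃ t s, t ∉ S ∧ s ∈ S ∧ A t s ≠ 0 := by
  by_contra hcon
  push_neg at hcon
  set k := S.card with hk
  have hk0 : 0 < k := Finset.card_pos.mpr h1
  have hkn : k < n := by
    have := Finset.card_le_univ S
    simp only [Finset.card_univ, Fintype.card_fin] at this
    rcases this.lt_or_eq with h | h
    · exact h
    · exact absurd (Finset.eq_univ_of_card S (by simp [h])) h2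
  have hcard : n = k + (n - k) := by omega
  have hTc : Sᶜ.card = n - k := by
    rw [Finset.card_compl, Fintype.card_fin, hk]
  let eS : Fin k ≃o {x // x ∈ S} := S.orderIsoOfFin rfl
  let eT : Fin (n - k) ≃o {x // x ∈ Sᶜ} := Sᶜ.orderIsoOfFin hTc
  let eT' : {x // x ∈ Sᶜ} ≃ {x // x ∉ S} :=
    Equiv.subtypeEquivRight fun x => Finset.mem_compl
  let σ : Equiv.Perm (Fin n) :=
    ((finCongr hcard).trans finSumFinEquiv.symm).trans
      ((eS.toEquiv.sumCongr (eT.toEquiv.trans eT')).trans (Equiv.sumCompl (· ∈ S)))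
  have hmem : ∀ j : Fin n, (j : ℕ) < k → σ j ∈ S := by
    intro j hj
    have hcast : (finCongr hcard) j = Fin.castAdd (n - k) ⟨(j : ℕ), hj⟩ := by
      ext; simp
    simp only [σ, Equiv.trans_apply, hcast, finSumFinEquiv_symm_apply_castAdd,
      Equiv.sumCongr_apply, Sum.map_inl, Equiv.sumCompl_apply_inl]
    exact (eS ⟨(j : ℕ), hj⟩).2
  have hnmem : ∀ i : Fin n, k ≤ (i : ℕ) → σ i ∉ S := by
    intro i hi
    have hcast : (finCongr hcard) i = Fin.natAdd k ⟨(i : ℕ) - k, by omega⟩ := by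
      ext; simp; omega
    simp only [σ, Equiv.trans_apply, hcast, finSumFinEquiv_symm_apply_natAdd,
      Equiv.sumCongr_apply, Sum.map_inr, Equiv.sumCompl_apply_inr]
    exact (eT' (eT ⟨(i : ℕ) - k, by omega⟩)).2
  exact hirr ⟨k, hk0, hkn, σ, fun i j hi hj =>
    hcon (σ i) (σ j) (hnmem i hi) (hmem j hj)⟩


variable {n : ℕ} {A : Matrix (Fin n) (Fin n) ℝ}

lemma mulVec_apply' (M : Matrix (Fin n) (Fin n) ℝ) (x : Fin n → ℝ) (i : Fin n) :
    M.mulVec x i = ∑ j, M i j * x j := rfl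

lemma mulVec_nonneg {M : Matrix (Fin n) (Fin n) ℝ} (hM : ∀ i j, 0 ≤ M i j)
    {x : Fin n → ℝ} (hx : ∀ i, 0 ≤ x i) : ∀ i, 0 ≤ M.mulVec x i := fun i => by
  rw [mulVec_apply']
  exact Finset.sum_nonneg fun j _ => mul_nonneg (hM i j) (hx j)

lemma pow_nonneg_entries {M : Matrix (Fin n) (Fin n) ℝ} (hM : ∀ i j, 0 ≤ M i j) (k : ℕ) :
    ∀ i j, 0 ≤ (M ^ k) i j := by
  induction k with
  | zero => intro i j; by_cases h : i = j <;> simp [h, Matrix.one_apply]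
  | succ k ih =>
      intro i j
      rw [pow_succ, Matrix.mul_apply]
      exact Finset.sum_nonneg fun l _ => mul_nonneg (ih i l) (hM l j)

lemma one_add_nonneg (hpos : ∀ i j, 0 ≤ A i j) : ∀ i j, 0 ≤ (1 + A) i j := by
  intro i j
  by_cases h : i = j
  · subst h
    simp only [Matrix.add_apply, Matrix.one_apply_eq]
    linarith [hpos i i]
  · simp only [Matrix.add_apply, Matrix.one_apply_ne h, zero_add]
    exact hpos i j

/-- support growth: one application of `1 + A` keeps support and adds a new element
if the support is a proper nonempty subset. -/
lemma support_grow (hpos : ∀ i j, 0 ≤ A i j)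
    (hirr : ¬ ∃ k : ℕ, 0 < k ∧ k < n ∧ ∃ σ : Equiv.Perm (Fin n),
      ∀ i j : Fin n, k ≤ (i : ℕ) → (j : ℕ) < k → A (σ i) (σ j) = 0)
    {x : Fin n → ℝ} (hx : ∀ i, 0 ≤ x i) :
    (univ.filter (fun i => 0 < x i)) ⊆
      (univ.filter (fun i => 0 < (1 + A).mulVec x i)) ∧
    ((univ.filter (fun i => 0 < x i)).Nonempty →
      univ.filter (fun i => 0 < x i) ≠ univ →
      (univ.filter (fun i => 0 < x i)).card + 1 ≤
        (univ.filter (fun i => 0 < (1 + A).mulVec x i)).card) := by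
  have hy : ∀ i, (1 + A).mulVec x i = x i + A.mulVec x i := by
    intro i
    rw [Matrix.add_mulVec, Matrix.one_mulVec]
    rfl
  have hsub : (univ.filter (fun i => 0 < x i)) ⊆
      (univ.filter (fun i => 0 < (1 + A).mulVec x i)) := by
    intro i hi
    rw [Finset.mem_filter] at hi ⊢
    refine ⟨Finset.mem_univ i, ?_⟩
    rw [hy]
    have := mulVec_nonneg hpos hx i
    linarith [hi.2]
  refine ⟨hsub, fun hne hnu => ?_⟩
  obtain ⟨t, s, hts, hs, hA⟩ := esc A hirr _ hne hnu
  have hAts : 0 < A t s := lt_of_le_of_ne (hpos t s) (Ne.symm hA)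
  rw [Finset.mem_filter] at hs
  have hxt : x t ≤ 0 := by
    rw [Finset.mem_filter] at hts
    push_neg at hts
    exact hts (Finset.mem_univ t)
  have ht' : t ∈ univ.filter (fun i => 0 < (1 + A).mulVec x i) := by
    rw [Finset.mem_filter]
    refine ⟨Finset.mem_univ t, ?_⟩
    rw [hy]
    have hsum : 0 < A.mulVec x t := by
      have : ∀ j ∈ univ, 0 ≤ A t j * x j := fun j _ => mul_nonneg (hpos t j) (hx j)
      have hmem : s ∈ (univ : Finset (Fin n)) := Finset.mem_univ s
      calc 0 < A t s * x s := mul_pos hAts hs.2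
        _ ≤ ∑ j, A t j * x j := Finset.single_le_sum this hmem
        _ = A.mulVec x t := (mulVec_apply' A x t).symm
    have hxt0 : x t = 0 := le_antisymm hxt (hx t)
    rw [hxt0, zero_add]
    exact hsum
  have : insert t (univ.filter (fun i => 0 < x i)) ⊆
      univ.filter (fun i => 0 < (1 + A).mulVec x i) := by
    rw [Finset.insert_subset_iff]
    exact ⟨ht', hsub⟩
  calc (univ.filter (fun i => 0 < x i)).card + 1
      = (insert t (univ.filter (fun i => 0 < x i))).card := by
        rw [Finset.card_insert_of_notMem hts]
    _ ≤ _ := Finset.card_le_card this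

lemma pow_mulVec_pos (hpos : ∀ i j, 0 ≤ A i j)
    (hirr : ¬ ∃ k : ℕ, 0 < k ∧ k < n ∧ ∃ σ : Equiv.Perm (Fin n),
      ∀ i j : Fin n, k ≤ (i : ℕ) → (j : ℕ) < k → A (σ i) (σ j) = 0)
    {x : Fin n → ℝ} (hx : ∀ i, 0 ≤ x i) (hx0 : x ≠ 0) :
    ∀ i, 0 < ((1 + A) ^ (n - 1)).mulVec x i := by
  have hn1 : 0 < n := by
    rcases Nat.eq_zero_or_pos n with h | h
    · subst h
      exact absurd (funext fun i : Fin 0 => i.elim0) hx0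
    · exact h
  have key : ∀ k : ℕ, (∀ i, 0 ≤ ((1 + A) ^ k).mulVec x i) ∧
      min n (1 + k) ≤ (univ.filter (fun i => 0 < ((1 + A) ^ k).mulVec x i)).card := by
    intro k
    induction k with
    | zero =>
        simp only [pow_zero, Matrix.one_mulVec]
        refine ⟨hx, ?_⟩
        have : ∃ i, 0 < x i := by
          by_contra hc
          push_neg at hc
          exact hx0 (funext fun i => le_antisymm (hc i) (hx i))
        obtain ⟨i, hi⟩ := this
        have : 0 < (univ.filter (fun i => 0 < x i)).card :=
          Finset.card_pos.mpr ⟨i, Finset.mem_filter.mpr ⟨Finset.mem_univ i, hi⟩⟩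
        omega
    | succ k ih =>
        obtain ⟨ih1, ih2⟩ := ih
        have hstep : ((1 + A) ^ (k + 1)).mulVec x = (1 + A).mulVec (((1 + A) ^ k).mulVec x) := by
          rw [Matrix.mulVec_mulVec, ← pow_succ']
        obtain ⟨hsub, hgrow⟩ := support_grow hpos hirr ih1
        constructor
        · intro i
          rw [hstep]
          exact mulVec_nonneg (one_add_nonneg hpos) ih1 i
        · rw [hstep]
          by_cases hu : univ.filter (fun i => 0 < ((1 + A) ^ k).mulVec x i) = univ
          · have : (univ.filter (fun i => 0 < ((1 + A) ^ k).mulVec x i)).card = n := by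
              rw [hu, Finset.card_univ, Fintype.card_fin]
            have hle := Finset.card_le_card hsub
            omega
          · have hne : (univ.filter (fun i => 0 < ((1 + A) ^ k).mulVec x i)).Nonempty := by
              rw [← Finset.card_pos]
              omega
            have h1 := hgrow hne hu
            omega
  obtain ⟨hnn, hcard⟩ := key (n - 1)
  have hcover : univ.filter (fun i => 0 < ((1 + A) ^ (n - 1)).mulVec x i) = univ := by
    apply Finset.eq_univ_of_card
    have hle := Finset.card_le_univ (univ.filter (fun i => 0 < ((1 + A) ^ (n - 1)).mulVec x i))
    rw [Fintype.card_fin] at hle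
    have : min n (1 + (n - 1)) = n := by omega
    rw [Fintype.card_fin]
    omega
  intro i
  have : i ∈ univ.filter (fun i => 0 < ((1 + A) ^ (n - 1)).mulVec x i) := by
    rw [hcover]; exact Finset.mem_univ i
  exact (Finset.mem_filter.mp this).2


end Comb

section CW
variable {n : ℕ}

/-- The Collatz–Wielandt set. -/
def CW (A : Matrix (Fin n) (Fin n) ℝ) : Set ℝ :=
  {ρ | ∃ x : Fin n → ℝ, (∀ i, 0 ≤ x i) ∧ x ≠ 0 ∧ ∀ i, ρ * x i ≤ A.mulVec x i}

/-- The Perron root. -/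
noncomputable def pr (A : Matrix (Fin n) (Fin n) ℝ) : ℝ := sSup (CW A)

variable {A : Matrix (Fin n) (Fin n) ℝ}


lemma cw_nonempty (hpos : ∀ i j, 0 ≤ A i j) (hn : 0 < n) : (CW A).Nonempty := by
  refine ⟨0, fun _ => 1, fun i => zero_le_one, ?_, fun i => ?_⟩
  · intro h
    have := congrFun h ⟨0, hn⟩
    simp at this
  · rw [zero_mul]
    exact mulVec_nonneg hpos (fun _ => zero_le_one) i

lemma sum_pos_of_nonneg_ne_zero {x : Fin n → ℝ} (hx : ∀ i, 0 ≤ x i) (hx0 : x ≠ 0) :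
    0 < ∑ i, x i := by
  have : ∃ i, 0 < x i := by
    by_contra hc
    push_neg at hc
    exact hx0 (funext fun i => le_antisymm (hc i) (hx i))
  obtain ⟨i, hi⟩ := this
  calc (0:ℝ) < x i := hi
    _ ≤ ∑ j, x j := Finset.single_le_sum (fun j _ => hx j) (Finset.mem_univ i)

lemma cw_bddAbove (hpos : ∀ i j, 0 ≤ A i j) : BddAbove (CW A) := by
  refine ⟨∑ i, ∑ j, A i j, fun ρ hρ => ?_⟩
  obtain ⟨x, hx, hx0, hineq⟩ := hρ
  have hn : 0 < n := by
    rcases Nat.eq_zero_or_pos n with h | h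
    · subst h; exact absurd (funext fun i : Fin 0 => i.elim0) hx0
    · exact h
  obtain ⟨m, -, hm⟩ := Finset.exists_max_image univ x ⟨⟨0, hn⟩, Finset.mem_univ _⟩
  have hxm : 0 < x m := by
    have : ∃ i, 0 < x i := by
      by_contra hc
      push_neg at hc
      exact hx0 (funext fun i => le_antisymm (hc i) (hx i))
    obtain ⟨i, hi⟩ := this
    exact lt_of_lt_of_le hi (hm i (Finset.mem_univ i))
  have h1 : ρ * x m ≤ (∑ j, A m j) * x m := by
    calc ρ * x m ≤ A.mulVec x m := hineq m
      _ = ∑ j, A m j * x j := rfl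
      _ ≤ ∑ j, A m j * x m :=
        Finset.sum_le_sum fun j _ => mul_le_mul_of_nonneg_left (hm j (Finset.mem_univ j)) (hpos m j)
      _ = (∑ j, A m j) * x m := by rw [Finset.sum_mul]
  have h2 : ρ ≤ ∑ j, A m j := le_of_mul_le_mul_right h1 hxm
  calc ρ ≤ ∑ j, A m j := h2
    _ ≤ ∑ i, ∑ j, A i j := Finset.single_le_sum
        (fun i _ => Finset.sum_nonneg fun j _ => hpos i j) (Finset.mem_univ m)

lemma row_sum_pos (hpos : ∀ i j, 0 ≤ A i j)
    (hirr : ¬ ∃ k : ℕ, 0 < k ∧ k < n ∧ ∃ σ : Equiv.Perm (Fin n),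
      ∀ i j : Fin n, k ≤ (i : ℕ) → (j : ℕ) < k → A (σ i) (σ j) = 0)
    (hn : 2 ≤ n) (i : Fin n) : 0 < ∑ j, A i j := by
  have h1 : ({i}ᶜ : Finset (Fin n)).Nonempty := by
    rw [← Finset.card_pos, Finset.card_compl, Finset.card_singleton, Fintype.card_fin]
    omega
  have h2 : ({i}ᶜ : Finset (Fin n)) ≠ univ := by
    intro h
    have : i ∈ ({i}ᶜ : Finset (Fin n)) := h ▸ Finset.mem_univ i
    simp at this
  obtain ⟨t, s, hts, hs, hA⟩ := esc A hirr _ h1 h2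
  have ht : t = i := by
    by_contra h
    exact hts (Finset.mem_compl.mpr (by simp [h]))
  subst ht
  calc (0:ℝ) < A t s := lt_of_le_of_ne (hpos t s) (Ne.symm hA)
    _ ≤ ∑ j, A t j := Finset.single_le_sum (fun j _ => hpos t j) (Finset.mem_univ s)

lemma pr_pos (hpos : ∀ i j, 0 ≤ A i j)
    (hirr : ¬ ∃ k : ℕ, 0 < k ∧ k < n ∧ ∃ σ : Equiv.Perm (Fin n),
      ∀ i j : Fin n, k ≤ (i : ℕ) → (j : ℕ) < k → A (σ i) (σ j) = 0)
    (hn : 2 ≤ n) : 0 < pr A := by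
  have hn0 : 0 < n := by omega
  set ρ0 : ℝ := (univ : Finset (Fin n)).inf' (by
    rw [Finset.univ_nonempty_iff]; exact ⟨⟨0, hn0⟩⟩) (fun i => ∑ j, A i j) with hρ0
  have hρ0pos : 0 < ρ0 := by
    rw [hρ0, Finset.lt_inf'_iff]
    exact fun i _ => row_sum_pos hpos hirr hn i
  have hmem : ρ0 ∈ CW A := by
    refine ⟨fun _ => 1, fun _ => zero_le_one, ?_, fun i => ?_⟩
    · intro h
      have := congrFun h ⟨0, hn0⟩
      simp at this
    · have : A.mulVec (fun _ => 1) i = ∑ j, A i j := by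
        rw [mulVec_apply']
        simp
      rw [this, mul_one]
      exact Finset.inf'_le _ (Finset.mem_univ i)
  exact lt_of_lt_of_le hρ0pos (le_csSup (cw_bddAbove hpos) hmem)

lemma exists_cw_max (hpos : ∀ i j, 0 ≤ A i j)
    (hirr : ¬ ∃ k : ℕ, 0 < k ∧ k < n ∧ ∃ σ : Equiv.Perm (Fin n),
      ∀ i j : Fin n, k ≤ (i : ℕ) → (j : ℕ) < k → A (σ i) (σ j) = 0)
    (hn : 2 ≤ n) :
    ∃ x : Fin n → ℝ, (∀ i, 0 ≤ x i) ∧ x ≠ 0 ∧ ∀ i, pr A * x i ≤ A.mulVec x i := by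
  have hn0 : 0 < n := by omega
  set K : Set (Fin n → ℝ) := {x | (∀ i, 0 ≤ x i) ∧ ∑ i, x i = 1} with hK
  have hKsub : K ⊆ Set.Icc 0 1 := by
    rintro x ⟨h1, h2⟩
    constructor
    · intro i; exact h1 i
    · intro i
      calc x i ≤ ∑ j, x j := Finset.single_le_sum (fun j _ => h1 j) (Finset.mem_univ i)
        _ = 1 := h2
  have hKclosed : IsClosed K := by
    have : K = (⋂ i, {x : Fin n → ℝ | 0 ≤ x i}) ∩ {x : Fin n → ℝ | ∑ i, x i = 1} := by
      ext x; simp [hK, Set.mem_iInter]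
    rw [this]
    exact (isClosed_iInter fun i =>
        isClosed_le continuous_const (continuous_apply i)).inter
      (isClosed_eq (continuous_finset_sum _ fun i _ => continuous_apply i) continuous_const)
  have hKcomp : IsCompact K := IsCompact.of_isClosed_subset isCompact_Icc hKclosed hKsub
  -- a sequence of approximate witnesses
  have hwit : ∀ m : ℕ, ∃ u : Fin n → ℝ, u ∈ K ∧
      ∀ i, (pr A - 1 / (m + 1)) * u i ≤ A.mulVec u i := by
    intro m
    have hlt : pr A - 1 / (m + 1) < pr A := by
      have : (0:ℝ) < 1 / (m + 1) := by positivity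
      linarith
    obtain ⟨ρ, hρmem, hρ⟩ := exists_lt_of_lt_csSup (cw_nonempty hpos hn0) hlt
    obtain ⟨x, hx, hx0, hineq⟩ := hρmem
    have hsum : 0 < ∑ i, x i := sum_pos_of_nonneg_ne_zero hx hx0
    refine ⟨(∑ i, x i)⁻¹ • x, ⟨fun i => ?_, ?_⟩, fun i => ?_⟩
    · exact mul_nonneg (by positivity) (hx i)
    · simp only [Pi.smul_apply, smul_eq_mul, ← Finset.mul_sum]
      field_simp
    · rw [Matrix.mulVec_smul]
      simp only [Pi.smul_apply, smul_eq_mul]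
      rw [← mul_assoc, mul_comm (pr A - 1/(m+1)) (∑ i, x i)⁻¹, mul_assoc]
      refine mul_le_mul_of_nonneg_left ?_ (by positivity)
      calc (pr A - 1/(m+1)) * x i ≤ ρ * x i :=
            mul_le_mul_of_nonneg_right hρ.le (hx i)
        _ ≤ A.mulVec x i := hineq i
  choose u huK huineq using hwit
  obtain ⟨x, hxK, φ, hφ, hconv⟩ := hKcomp.tendsto_subseq huK
  refine ⟨x, hxK.1, ?_, fun i => ?_⟩
  · intro h
    rw [h] at hxK
    obtain ⟨-, h2⟩ := hxK
    simp at h2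
  · -- limit of coordinates
    have hxi : Filter.Tendsto (fun m => u (φ m) i) Filter.atTop (nhds (x i)) :=
      ((continuous_apply i).continuousAt.tendsto).comp hconv
    have hAxi : Filter.Tendsto (fun m => A.mulVec (u (φ m)) i) Filter.atTop
        (nhds (A.mulVec x i)) := by
      have : ∀ y : Fin n → ℝ, A.mulVec y i = ∑ j, A i j * y j := fun y => rfl
      simp only [this]
      exact tendsto_finset_sum _ fun j _ =>
        (tendsto_const_nhds.mul (((continuous_apply j).continuousAt.tendsto).comp hconv))
    have hcoef : Filter.Tendsto (fun m : ℕ => pr A - 1 / (φ m + 1)) Filter.atTop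
        (nhds (pr A)) := by
      have h0 : Filter.Tendsto (fun m : ℕ => 1 / ((m : ℝ) + 1)) Filter.atTop (nhds 0) :=
        tendsto_one_div_add_atTop_nhds_zero_nat
      have := h0.comp hφ.tendsto_atTop
      have h2 : Filter.Tendsto (fun m : ℕ => pr A - 1 / ((φ m : ℝ) + 1)) Filter.atTop
          (nhds (pr A - 0)) := tendsto_const_nhds.sub this
      simpa using h2
    refine le_of_tendsto_of_tendsto (hcoef.mul hxi) hAxi ?_
    filter_upwards with m
    exact huineq (φ m) i

lemma pow_mulVec_eigen {k : ℕ} {r : ℝ} {w : Fin n → ℝ} (hw : A.mulVec w = r • w) :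
    ((1 + A) ^ k).mulVec w = (1 + r) ^ k • w := by
  induction k with
  | zero => simp
  | succ k ih =>
      have : ((1 + A) ^ (k+1)).mulVec w = (1 + A).mulVec (((1 + A) ^ k).mulVec w) := by
        rw [Matrix.mulVec_mulVec, ← pow_succ']
      rw [this, ih, Matrix.mulVec_smul, Matrix.add_mulVec, Matrix.one_mulVec, hw, pow_succ']
      ext i
      simp [Pi.smul_apply, smul_eq_mul]
      ring

lemma cw_eigen (hpos : ∀ i j, 0 ≤ A i j)
    (hirr : ¬ ∃ k : ℕ, 0 < k ∧ k < n ∧ ∃ σ : Equiv.Perm (Fin n),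
      ∀ i j : Fin n, k ≤ (i : ℕ) → (j : ℕ) < k → A (σ i) (σ j) = 0)
    (hn : 2 ≤ n) {w : Fin n → ℝ} (hw : ∀ i, 0 ≤ w i) (hw0 : w ≠ 0)
    (hineq : ∀ i, pr A * w i ≤ A.mulVec w i) :
    A.mulVec w = pr A • w ∧ ∀ i, 0 < w i := by
  have hn0 : 0 < n := by omega
  set r := pr A with hr
  set P := (1 + A) ^ (n - 1) with hP
  have heig : A.mulVec w = r • w := by
    by_contra hne
    set d : Fin n → ℝ := A.mulVec w - r • w with hd
    have hd0 : ∀ i, 0 ≤ d i := fun i => by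
      simp only [hd, Pi.sub_apply, Pi.smul_apply, smul_eq_mul, sub_nonneg]
      exact hineq i
    have hdne : d ≠ 0 := fun h => hne (by rwa [hd, sub_eq_zero] at h)
    set v := P.mulVec w with hv
    have hvpos : ∀ i, 0 < v i := pow_mulVec_pos hpos hirr hw hw0
    have hPd : ∀ i, 0 < P.mulVec d i := pow_mulVec_pos hpos hirr hd0 hdne
    have hcomm : P * A = A * P := by
      have h1 : (1 + A) * A = A * (1 + A) := by
        rw [add_mul, mul_add, one_mul, mul_one]
      have : Commute (1 + A) A := h1
      exact (this.pow_left (n - 1)).eq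
    have hkey : P.mulVec d = A.mulVec v - r • v := by
      rw [hd, Matrix.mulVec_sub, Matrix.mulVec_smul, hv, Matrix.mulVec_mulVec, hcomm,
        ← Matrix.mulVec_mulVec]
    have hAv : ∀ i, r * v i < A.mulVec v i := by
      intro i
      have := hPd i
      rw [hkey] at this
      simp only [Pi.sub_apply, Pi.smul_apply, smul_eq_mul, sub_pos] at this
      exact this
    set ε := (univ : Finset (Fin n)).inf' (by
      rw [Finset.univ_nonempty_iff]; exact ⟨⟨0, hn0⟩⟩)
      (fun i => (A.mulVec v i - r * v i) / v i) with hε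
    have hεpos : 0 < ε := by
      rw [hε, Finset.lt_inf'_iff]
      intro i _
      exact div_pos (by linarith [hAv i]) (hvpos i)
    have hmem : r + ε ∈ CW A := by
      refine ⟨v, fun i => (hvpos i).le, ?_, fun i => ?_⟩
      · intro h
        exact absurd (congrFun h ⟨0, hn0⟩) (ne_of_gt (hvpos ⟨0, hn0⟩))
      · have h1 : ε ≤ (A.mulVec v i - r * v i) / v i := Finset.inf'_le _ (Finset.mem_univ i)
        have h2 : ε * v i ≤ A.mulVec v i - r * v i := by
          rw [← le_div_iff₀ (hvpos i)]
          exact h1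
        ring_nf
        nlinarith [h2]
    have : r + ε ≤ r := le_csSup (cw_bddAbove hpos) hmem
    linarith
  refine ⟨heig, fun i => ?_⟩
  have hrpos : 0 < r := pr_pos hpos hirr hn
  have hPw : P.mulVec w = (1 + r) ^ (n - 1) • w := pow_mulVec_eigen heig
  have hPwpos : 0 < P.mulVec w i := pow_mulVec_pos hpos hirr hw hw0 i
  rw [hPw] at hPwpos
  simp only [Pi.smul_apply, smul_eq_mul] at hPwpos
  have hpow : 0 < (1 + r) ^ (n - 1) := by positivity
  nlinarith [hPwpos, hpow]

lemma abs_root_mem_cw (hpos : ∀ i j, 0 ≤ A i j) {μ : ℂ}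
    (hroot : (A.map (Complex.ofReal ·)).charpoly.IsRoot μ) : ‖μ‖ ∈ CW A := by
  set B := A.map (Complex.ofReal ·) with hB
  have hdet : (μ • (1 : Matrix (Fin n) (Fin n) ℂ) - B).det = 0 := by
    rw [← eval_det_charmatrix]; exact hroot
  obtain ⟨y, hy0, hy⟩ := Matrix.exists_mulVec_eq_zero_iff.mpr hdet
  have heig : B.mulVec y = μ • y := by
    have h1 : (μ • (1 : Matrix (Fin n) (Fin n) ℂ) - B).mulVec y
        = μ • y - B.mulVec y := by
      rw [Matrix.sub_mulVec, Matrix.smul_mulVec, Matrix.one_mulVec]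
    rw [h1] at hy
    exact (sub_eq_zero.mp hy).symm
  set z : Fin n → ℝ := fun i => ‖y i‖ with hz
  have hzpos : ∀ i, 0 ≤ z i := fun i => norm_nonneg _
  have hz0 : z ≠ 0 := by
    intro h
    apply hy0
    funext i
    have := congrFun h i
    simpa [hz] using this
  refine ⟨z, hzpos, hz0, fun i => ?_⟩
  have h1 : ‖μ‖ * z i = ‖(μ • y) i‖ := by
    simp only [Pi.smul_apply, smul_eq_mul, norm_mul, hz]
  rw [h1, ← heig]
  have h2 : B.mulVec y i = ∑ j, B i j * y j := rfl
  rw [h2]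
  calc ‖∑ j, B i j * y j‖ ≤ ∑ j, ‖B i j * y j‖ :=
        norm_sum_le _ _
    _ = ∑ j, A i j * z j := by
        refine Finset.sum_congr rfl fun j _ => ?_
        rw [norm_mul]
        congr 1
        simp [hB, abs_of_nonneg (hpos i j)]
    _ = A.mulVec z i := (mulVec_apply' A z i).symm

lemma pr_isRoot (hpos : ∀ i j, 0 ≤ A i j)
    (hirr : ¬ ∃ k : ℕ, 0 < k ∧ k < n ∧ ∃ σ : Equiv.Perm (Fin n),
      ∀ i j : Fin n, k ≤ (i : ℕ) → (j : ℕ) < k → A (σ i) (σ j) = 0)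
    (hn : 2 ≤ n) : A.charpoly.IsRoot (pr A) := by
  obtain ⟨x, hx, hx0, hineq⟩ := exists_cw_max hpos hirr hn
  obtain ⟨heig, -⟩ := cw_eigen hpos hirr hn hx hx0 hineq
  have hker : (pr A • (1 : Matrix (Fin n) (Fin n) ℝ) - A).mulVec x = 0 := by
    rw [Matrix.sub_mulVec, Matrix.smul_mulVec, Matrix.one_mulVec, heig, sub_self]
  have hdet : (pr A • (1 : Matrix (Fin n) (Fin n) ℝ) - A).det = 0 :=
    Matrix.exists_mulVec_eq_zero_iff.mp ⟨x, hx0, hker⟩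
  rw [Polynomial.IsRoot, eval_det_charmatrix]
  exact hdet

end CW

section Minor
variable {N : ℕ} {A : Matrix (Fin (N + 1)) (Fin (N + 1)) ℝ}

lemma minor_noroot (hpos : ∀ i j, 0 ≤ A i j)
    (hirr : ¬ ∃ k : ℕ, 0 < k ∧ k < N + 1 ∧ ∃ σ : Equiv.Perm (Fin (N + 1)),
      ∀ i j : Fin (N + 1), k ≤ (i : ℕ) → (j : ℕ) < k → A (σ i) (σ j) = 0)
    (hn : 2 ≤ N + 1) (i : Fin (N + 1)) {s : ℝ} (hs : pr A ≤ s) :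
    ¬ (A.submatrix i.succAbove i.succAbove).charpoly.IsRoot s := by
  intro hroot
  set M := A.submatrix i.succAbove i.succAbove with hM
  have hdet : (s • (1 : Matrix (Fin N) (Fin N) ℝ) - M).det = 0 := by
    rw [← eval_det_charmatrix]; exact hroot
  obtain ⟨z, hz0, hz⟩ := Matrix.exists_mulVec_eq_zero_iff.mpr hdet
  have heig : M.mulVec z = s • z := by
    have h1 : (s • (1 : Matrix (Fin N) (Fin N) ℝ) - M).mulVec z = s • z - M.mulVec z := by
      rw [Matrix.sub_mulVec, Matrix.smul_mulVec, Matrix.one_mulVec]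
    rw [h1] at hz
    exact (sub_eq_zero.mp hz).symm
  have hspos : 0 < s := lt_of_lt_of_le (pr_pos hpos hirr hn) hs
  -- extend |z| by zero at index i
  set w : Fin (N + 1) → ℝ := fun j => ∑ k, if i.succAbove k = j then |z k| else 0 with hw
  have hwi : w i = 0 := by
    rw [hw]
    refine Finset.sum_eq_zero fun k _ => ?_
    rw [if_neg (Fin.succAbove_ne i k)]
  have hwsa : ∀ k, w (i.succAbove k) = |z k| := by
    intro k
    rw [show w (i.succAbove k)
        = ∑ k' : Fin N, if i.succAbove k' = i.succAbove k then |z k'| else 0 from rfl]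
    rw [Finset.sum_eq_single k]
    · rw [if_pos rfl]
    · intro b _ hb
      rw [if_neg (fun h => hb (Fin.succAbove_right_injective h))]
    · intro h; exact absurd (Finset.mem_univ k) h
  have hwnn : ∀ j, 0 ≤ w j := by
    intro j
    rw [hw]
    exact Finset.sum_nonneg fun k _ => by positivity
  have hw0 : w ≠ 0 := by
    intro h
    apply hz0
    funext k
    have := congrFun h (i.succAbove k)
    rw [hwsa k] at this
    simpa using this
  have hAw : ∀ j, A.mulVec w j = ∑ k, A j (i.succAbove k) * |z k| := by
    intro j
    rw [mulVec_apply' A w j, Fin.sum_univ_succAbove (fun l => A j l * w l) i, hwi, mul_zero,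
      zero_add]
    exact Finset.sum_congr rfl fun k _ => by rw [hwsa k]
  have hineqs : ∀ j, s * w j ≤ A.mulVec w j := by
    intro j
    by_cases hj : j = i
    · subst hj
      rw [hwi, mul_zero, hAw]
      exact Finset.sum_nonneg fun k _ => mul_nonneg (hpos _ _) (abs_nonneg _)
    · obtain ⟨k₀, hk₀⟩ := Fin.exists_succAbove_eq (hj : j ≠ i)
      rw [← hk₀, hwsa k₀, hAw]
      calc s * |z k₀| = |s * z k₀| := by
            rw [abs_mul, abs_of_pos hspos]
        _ = |M.mulVec z k₀| := by rw [heig]; simp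
        _ = |∑ m, M k₀ m * z m| := by rw [mulVec_apply']
        _ ≤ ∑ m, |M k₀ m * z m| := Finset.abs_sum_le_sum_abs _ _
        _ = ∑ m, A (i.succAbove k₀) (i.succAbove m) * |z m| := by
            refine Finset.sum_congr rfl fun m _ => ?_
            rw [abs_mul, abs_of_nonneg (show (0:ℝ) ≤ M k₀ m from hpos _ _)]
            rfl
  have hle : s ≤ pr A := le_csSup (cw_bddAbove hpos) ⟨w, hwnn, hw0, hineqs⟩
  have hseq : s = pr A := le_antisymm hle hs
  obtain ⟨-, hwpos⟩ := cw_eigen hpos hirr hn hwnn hw0 (by rw [← hseq]; exact hineqs)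
  exact absurd hwi (ne_of_gt (hwpos i))

lemma minor_det_pos (hpos : ∀ i j, 0 ≤ A i j)
    (hirr : ¬ ∃ k : ℕ, 0 < k ∧ k < N + 1 ∧ ∃ σ : Equiv.Perm (Fin (N + 1)),
      ∀ i j : Fin (N + 1), k ≤ (i : ℕ) → (j : ℕ) < k → A (σ i) (σ j) = 0)
    (hn : 2 ≤ N + 1) (i : Fin (N + 1)) {t : ℝ} (ht : pr A ≤ t) :
    0 < (t • (1 : Matrix (Fin N) (Fin N) ℝ) - A.submatrix i.succAbove i.succAbove).det := by
  set M := A.submatrix i.succAbove i.succAbove with hM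
  set χ := M.charpoly with hχ
  have hmono := M.charpoly_monic
  have hdeg : 0 < χ.degree := by
    have hN : χ.natDegree = N := by
      rw [hχ, Matrix.charpoly_natDegree_eq_dim, Fintype.card_fin]
    rw [Polynomial.degree_eq_natDegree hmono.ne_zero, hN]
    exact_mod_cast by omega
  have htend := Polynomial.tendsto_atTop_of_leadingCoeff_nonneg χ hdeg
    (by rw [hmono.leadingCoeff]; exact zero_le_one)
  obtain ⟨b, hb1, hbt⟩ :=
    ((htend.eventually_ge_atTop 1).and (Filter.eventually_ge_atTop t)).exists
  have hne : χ.eval t ≠ 0 := minor_noroot hpos hirr hn i ht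
  have hevalpos : 0 < χ.eval t := by
    rcases lt_or_gt_of_ne hne with h | h
    · exfalso
      have hcont : ContinuousOn (fun u => χ.eval u) (Set.Icc t b) :=
        (Polynomial.continuous χ).continuousOn
      have hmem : (0:ℝ) ∈ Set.Icc (χ.eval t) (χ.eval b) := ⟨h.le, by linarith⟩
      obtain ⟨c, hc, hc0⟩ := intermediate_value_Icc hbt hcont hmem
      exact minor_noroot hpos hirr hn i (le_trans ht hc.1) hc0
    · exact h
  rw [← eval_det_charmatrix]
  exact hevalpos

end Minor

end PF

theorem perron_frobenius (n : ℕ) (hn : 2 ≤ n) (A : Matrix (Fin n) (Fin n) ℝ)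
    (hpos : ∀ i j, 0 ≤ A i j)
    (hirr : ¬ ∃ k : ℕ, 0 < k ∧ k < n ∧ ∃ σ : Equiv.Perm (Fin n),
      ∀ i j : Fin n, k ≤ (i : ℕ) → (j : ℕ) < k → A (σ i) (σ j) = 0) :
    ∃ ρ : ℝ, 0 < ρ ∧
      IsGreatest {r : ℝ | ∃ μ : ℂ,
        (A.map (Complex.ofReal ·)).charpoly.IsRoot μ ∧ ‖μ‖ = r} ρ ∧
      (A.map (Complex.ofReal ·)).charpoly.rootMultiplicity (ρ : ℂ) = 1 ∧
      ∃ x : Fin n → ℝ, (∀ i, 0 < x i) ∧ A.mulVec x = ρ • x := by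
  obtain ⟨N, rfl⟩ : ∃ N, n = N + 1 := ⟨n - 1, by omega⟩
  set r := PF.pr A with hr
  have hrpos : 0 < r := PF.pr_pos hpos hirr hn
  obtain ⟨x, hx, hx0, hineq⟩ := PF.exists_cw_max hpos hirr hn
  obtain ⟨heig, hxpos⟩ := PF.cw_eigen hpos hirr hn hx hx0 hineq
  have hrootR : A.charpoly.IsRoot r := PF.pr_isRoot hpos hirr hn
  have hmap' : (A.map (Complex.ofReal ·)).charpoly = A.charpoly.map Complex.ofRealHom := by
    have h0 : A.map (Complex.ofReal ·) = A.map (⇑Complex.ofRealHom) := rfl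
    rw [h0, Matrix.charpoly_map]
  have hχne : A.charpoly ≠ 0 := (Matrix.charpoly_monic A).ne_zero
  have hmultR : A.charpoly.rootMultiplicity r = 1 := by
    have hge : 1 ≤ A.charpoly.rootMultiplicity r :=
      (Polynomial.rootMultiplicity_pos hχne).mpr hrootR
    have hderiv_pos : 0 < (Polynomial.derivative A.charpoly).eval r := by
      rw [PF.derivative_charpoly_eval A r]
      exact Finset.sum_pos (fun i _ => PF.minor_det_pos hpos hirr hn i le_rfl)
        Finset.univ_nonempty
    have hle : A.charpoly.rootMultiplicity r ≤ 1 := by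
      by_contra h
      push_neg at h
      have h1 : 1 < A.charpoly.rootMultiplicity r := h
      have := Polynomial.isRoot_iterate_derivative_of_lt_rootMultiplicity h1
      rw [Function.iterate_one] at this
      exact absurd this (ne_of_gt hderiv_pos)
    omega
  refine ⟨r, hrpos, ⟨⟨(r : ℂ), ?_, ?_⟩, ?_⟩, ?_, ⟨x, hxpos, heig⟩⟩
  · -- (r : ℂ) is a root of the complex charpoly
    rw [hmap']
    show Polynomial.eval ((r : ℂ)) (A.charpoly.map Complex.ofRealHom) = 0
    rw [Polynomial.eval_map, show ((r : ℂ)) = Complex.ofRealHom r from rfl,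
      Polynomial.eval₂_at_apply]
    rw [show Polynomial.eval r A.charpoly = 0 from hrootR]
    simp
  · rw [Complex.norm_real, Real.norm_eq_abs, abs_of_pos hrpos]
  · -- upper bound
    rintro ρ' ⟨μ, hμroot, rfl⟩
    exact le_csSup (PF.cw_bddAbove hpos) (PF.abs_root_mem_cw hpos hμroot)
  · -- root multiplicity over ℂ
    set q := A.charpoly /ₘ (Polynomial.X - Polynomial.C r) with hq
    have hfac : (Polynomial.X - Polynomial.C r) * q = A.charpoly :=
      (Polynomial.mul_divByMonic_eq_iff_isRoot).mpr hrootR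
    have hqr : q.eval r ≠ 0 := by
      intro h0
      obtain ⟨q2, hq2⟩ := Polynomial.dvd_iff_isRoot.mpr h0
      have hdvd2 : (Polynomial.X - Polynomial.C r) ^ 2 ∣ A.charpoly :=
        ⟨q2, by rw [← hfac, hq2]; ring⟩
      have h2 : 2 ≤ A.charpoly.rootMultiplicity r :=
        (Polynomial.le_rootMultiplicity_iff hχne).mpr hdvd2
      omega
    have hmapfac : (A.map (Complex.ofReal ·)).charpoly =
        (Polynomial.X - Polynomial.C (r : ℂ)) * (q.map Complex.ofRealHom) := by
      rw [hmap', ← hfac, Polynomial.map_mul, Polynomial.map_sub, Polynomial.map_X,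
        Polynomial.map_C]
      rfl
    have hne0 : (Polynomial.X - Polynomial.C (r : ℂ)) * (q.map Complex.ofRealHom) ≠ 0 := by
      rw [← hmapfac]
      exact (Matrix.charpoly_monic _).ne_zero
    have hqC : ¬ (q.map Complex.ofRealHom).IsRoot (r : ℂ) := by
      show ¬ Polynomial.eval ((r : ℂ)) (q.map Complex.ofRealHom) = 0
      rw [Polynomial.eval_map, show ((r : ℂ)) = Complex.ofRealHom r from rfl,
        Polynomial.eval₂_at_apply]
      simpa using hqr
    rw [hmapfac, Polynomial.rootMultiplicity_mul hne0,
      Polynomial.rootMultiplicity_X_sub_C_self, Polynomial.rootMultiplicity_eq_zero hqC]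
end

section
/- Wielandt's primitivity bound: If A is a primitive n×n nonnegative matrix, then A^{(n−1)²+1} has all entries strictly positive. -/
namespace WielandtAux
variable {n : ℕ} {A : Matrix (Fin n) (Fin n) ℝ}

theorem nn (hpos : ∀ i j, 0 ≤ A i j) : ∀ m i j, 0 ≤ (A ^ m) i j := by
  intro m
  induction m with
  | zero => intro i j; simp [Matrix.one_apply]; positivity
  | succ m ih =>
    intro i j
    rw [pow_succ, Matrix.mul_apply]
    exact Finset.sum_nonneg fun v _ => mul_nonneg (ih i v) (hpos v j)

theorem W_add (hpos : ∀ i j, 0 ≤ A i j) {a b : ℕ} {i j : Fin n} :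
    0 < (A ^ (a + b)) i j ↔ ∃ v, 0 < (A ^ a) i v ∧ 0 < (A ^ b) v j := by
  rw [pow_add, Matrix.mul_apply]
  constructor
  · intro h
    by_contra hc
    push_neg at hc
    have : ∀ v ∈ Finset.univ, (A ^ a) i v * (A ^ b) v j = 0 := by
      intro v _
      rcases lt_or_eq_of_le (nn hpos a i v) with h1 | h1
      · rcases lt_or_eq_of_le (nn hpos b v j) with h2 | h2
        · exact absurd h2 (not_lt.2 (hc v h1))
        · rw [← h2, mul_zero]
      · rw [← h1, zero_mul]
    rw [Finset.sum_eq_zero this] at h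
    exact lt_irrefl 0 h
  · rintro ⟨v, h1, h2⟩
    exact Finset.sum_pos' (fun u _ => mul_nonneg (nn hpos a i u) (nn hpos b u j))
      ⟨v, Finset.mem_univ v, mul_pos h1 h2⟩

theorem W_zero {i j : Fin n} : 0 < (A ^ 0) i j ↔ i = j := by
  simp [Matrix.one_apply]
  split_ifs with h
  · simpa using h
  · simpa using h

end WielandtAux

namespace WielandtAux
variable {n : ℕ} {A : Matrix (Fin n) (Fin n) ℝ}

theorem walk_of_W (hpos : ∀ i j, 0 ≤ A i j) :
    ∀ {m : ℕ} {i j : Fin n}, 0 < (A ^ m) i j →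
    ∃ f : ℕ → Fin n, f 0 = i ∧ f m = j ∧ ∀ a < m, 0 < A (f a) (f (a + 1)) := by
  intro m
  induction m with
  | zero =>
    intro i j h
    exact ⟨fun _ => i, rfl, (W_zero.1 h).symm ▸ rfl, fun a ha => absurd ha (by omega)⟩
  | succ m ih =>
    intro i j h
    rw [W_add hpos] at h
    obtain ⟨v, h1, h2⟩ := h
    rw [pow_one] at h2
    obtain ⟨f, hf0, hfm, hfs⟩ := ih h1
    refine ⟨fun x => if x ≤ m then f x else j, by simpa using hf0, by simp, ?_⟩
    intro a ha
    rcases Nat.lt_or_ge a m with h' | h'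
    · simpa [Nat.le_of_lt h', Nat.succ_le_of_lt h'] using hfs a h'
    · have : a = m := by omega
      subst this
      simpa [hfm] using h2

theorem W_of_walk (hpos : ∀ i j, 0 ≤ A i j) :
    ∀ {m : ℕ} {i j : Fin n} (f : ℕ → Fin n), f 0 = i → f m = j →
    (∀ a < m, 0 < A (f a) (f (a + 1))) → 0 < (A ^ m) i j := by
  intro m
  induction m with
  | zero =>
    intro i j f h0 hm _
    rw [W_zero]; rw [← h0, hm]
  | succ m ih =>
    intro i j f h0 hm hs
    refine (W_add hpos (a := m) (b := 1)).2 ⟨f m, ih f h0 rfl (fun a ha => hs a (by omega)), ?_⟩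
    rw [pow_one, ← hm]
    exact hs m (by omega)

end WielandtAux

namespace WielandtAux
variable {n : ℕ} {A : Matrix (Fin n) (Fin n) ℝ}

theorem splice {f : ℕ → Fin n} {m a b : ℕ} (hab : a < b) (hbm : b ≤ m)
    (heq : f a = f b) (hs : ∀ x < m, 0 < A (f x) (f (x + 1))) :
    ∃ g : ℕ → Fin n, g 0 = f 0 ∧ g (m - (b - a)) = f m ∧
      ∀ x < m - (b - a), 0 < A (g x) (g (x + 1)) := by
  refine ⟨fun x => if x ≤ a then f x else f (x + (b - a)), by simp, ?_, ?_⟩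
  · rcases Nat.lt_or_ge a (m - (b - a)) with h | h
    · have : ¬ (m - (b - a) ≤ a) := by omega
      simp only [this, if_false]
      congr 1
      omega
    · have ha : m - (b - a) = a := by omega
      have hm : m = b := by omega
      simp only [ha, le_refl, if_true]
      rw [heq, hm]
  · intro x hx
    rcases Nat.lt_or_ge x a with h | h
    · simp only [Nat.le_of_lt h, if_pos, Nat.succ_le_of_lt h, if_true]
      exact hs x (by omega)
    rcases Nat.eq_or_lt_of_le h with h' | h'
    · have h1 : ¬ (x + 1 ≤ a) := by omega
      simp only []
      rw [if_pos h'.symm.le, if_neg h1, show x + 1 + (b - a) = b + 1 by omega,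
        show x = a from h'.symm, heq]
      exact hs b (by omega)
    · have h1 : ¬ (x ≤ a) := by omega
      have h2 : ¬ (x + 1 ≤ a) := by omega
      simp only [h1, h2, if_false]
      have : x + 1 + (b - a) = (x + (b - a)) + 1 := by omega
      rw [this]
      exact hs (x + (b - a)) (by omega)

end WielandtAux

namespace WielandtAux
variable {n : ℕ} {A : Matrix (Fin n) (Fin n) ℝ}

theorem succ_mod (m s : ℕ) (hs : 0 < s) :
    (m + 1) % s = m % s + 1 ∨ (m % s + 1 = s ∧ (m + 1) % s = 0) := by
  have h1 : (m + 1) % s = (m % s + 1 % s) % s := Nat.add_mod m 1 s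
  have hr : m % s < s := Nat.mod_lt _ hs
  rcases Nat.lt_or_ge (m % s + 1) s with h | h
  · left
    have hs2 : 1 < s := by omega
    rw [h1, Nat.mod_eq_of_lt hs2, Nat.mod_eq_of_lt h]
  · right
    have he : m % s + 1 = s := by omega
    refine ⟨he, ?_⟩
    rcases Nat.eq_or_lt_of_le hs with h2 | h2
    · rw [h1, ← h2]; simp [Nat.mod_one]
    · rw [h1, Nat.mod_eq_of_lt h2, he, Nat.mod_self]

/-- Walking around a closed walk `g` of length `s` (with `g s = g 0`), indices mod `s`. -/
theorem cycle_step {g : ℕ → Fin n} {s : ℕ} (hs : 0 < s) (hgs : g s = g 0)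
    (hg : ∀ x < s, 0 < A (g x) (g (x + 1))) (m : ℕ) :
    0 < A (g (m % s)) (g ((m + 1) % s)) := by
  have hr : m % s < s := Nat.mod_lt _ hs
  rcases succ_mod m s hs with h | ⟨h1, h2⟩
  · rw [h]; exact hg _ hr
  · rw [h2]
    have h3 := hg _ hr
    rwa [h1, hgs] at h3

/-- From a cycle vertex `g p`, there is a walk of any exact length `ℓ` ending on the cycle. -/
theorem cycle_walk {g : ℕ → Fin n} {s : ℕ} (hs : 0 < s) (hgs : g s = g 0)
    (hg : ∀ x < s, 0 < A (g x) (g (x + 1))) (hpos : ∀ i j, 0 ≤ A i j)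
    (p ℓ : ℕ) (hp : p < s) :
    0 < (A ^ ℓ) (g p) (g ((p + ℓ) % s)) := by
  refine W_of_walk hpos (fun a => g ((p + a) % s)) ?_ rfl ?_
  · simp [Nat.mod_eq_of_lt hp]
  · intro a _
    have := cycle_step hs hgs hg (A := A) (p + a)
    rwa [show p + a + 1 = p + (a+1) by omega] at this

theorem loop_pow {w : Fin n} {s : ℕ} (hpos : ∀ i j, 0 ≤ A i j)
    (hw : 0 < (A ^ s) w w) : ∀ u : ℕ, 0 < (A ^ (s * u)) w w := by
  intro u
  induction u with
  | zero => simp [Matrix.one_apply]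
  | succ u ih =>
    rw [show s * (u + 1) = s * u + s by ring]
    exact (W_add hpos).2 ⟨w, ih, hw⟩

end WielandtAux

namespace WielandtAux
variable {n : ℕ} {A : Matrix (Fin n) (Fin n) ℝ}

theorem row_nonzero (hpos : ∀ i j, 0 ≤ A i j) {k : ℕ} (hk1 : 0 < k)
    (hk : ∀ i j, 0 < (A ^ k) i j) (i : Fin n) : ∃ u, 0 < A i u := by
  have h := hk i i
  rw [show k = 1 + (k - 1) by omega, W_add hpos] at h
  obtain ⟨u, h1, _⟩ := h
  rw [pow_one] at h1
  exact ⟨u, h1⟩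

theorem reach (hpos : ∀ i j, 0 ≤ A i j) {k : ℕ} (hk1 : 0 < k)
    (hk : ∀ i j, 0 < (A ^ k) i j) (t : ℕ) (i : Fin n) : ∃ u, 0 < (A ^ t) i u := by
  induction t with
  | zero => exact ⟨i, by simp [Matrix.one_apply]⟩
  | succ t ih =>
    obtain ⟨u, hu⟩ := ih
    obtain ⟨u', hu'⟩ := row_nonzero hpos hk1 hk u
    exact ⟨u', (W_add hpos).2 ⟨u, hu, by rwa [pow_one]⟩⟩

theorem mono (hpos : ∀ i j, 0 ≤ A i j) {k : ℕ} (hk1 : 0 < k)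
    (hk : ∀ i j, 0 < (A ^ k) i j) {m m' : ℕ} (hm : ∀ i j, 0 < (A ^ m) i j)
    (h : m ≤ m') : ∀ i j, 0 < (A ^ m') i j := by
  intro i j
  obtain ⟨u, hu⟩ := reach hpos hk1 hk (m' - m) i
  rw [show m' = (m' - m) + m by omega, W_add hpos]
  exact ⟨u, hu, hm u j⟩

end WielandtAux

namespace WielandtAux
variable {n : ℕ} {A : Matrix (Fin n) (Fin n) ℝ}

theorem main (h2 : 2 ≤ n) (hpos : ∀ i j, 0 ≤ A i j) {k : ℕ} (hk1 : 0 < k)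
    (hk : ∀ i j, 0 < (A ^ k) i j) : ∀ i j, 0 < (A ^ ((n - 1) ^ 2 + 1)) i j := by
  classical
  have hn0 : 0 < n := by omega
  -- shortest closed walk length s
  have hex : ∃ ℓ, 0 < ℓ ∧ ∃ v : Fin n, 0 < (A ^ ℓ) v v :=
    ⟨k, hk1, ⟨0, hn0⟩, hk _ _⟩
  set s := Nat.find hex with hsdef
  obtain ⟨hs1, v, hv⟩ := Nat.find_spec hex
  have hmin : ∀ ℓ, 0 < ℓ → ℓ < s → ∀ x : Fin n, ¬ 0 < (A ^ ℓ) x x := by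
    intro ℓ hℓ hls x hx
    exact Nat.find_min hex hls ⟨hℓ, x, hx⟩
  obtain ⟨g, hg0, hgs, hgstep⟩ := walk_of_W hpos hv
  have hgs0 : g s = g 0 := by rw [hg0, hgs]
  -- the cycle vertices are distinct
  have hinj : ∀ a b, a < s → b < s → g a = g b → a = b := by
    intro a b ha hb heq
    by_contra hne
    wlog hab : a < b generalizing a b
    · exact this b a hb ha heq.symm (Ne.symm hne) (by omega)
    have hcw : 0 < (A ^ (b - a)) (g a) (g a) := by
      refine W_of_walk hpos (fun x => g (x + a)) (by simp) ?_ ?_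
      · rw [show b - a + a = b by omega]
        exact heq.symm
      · intro x hx
        have := hgstep (x + a) (by omega)
        rwa [show x + a + 1 = x + 1 + a by omega] at this
    exact hmin (b - a) (by omega) (by omega) _ hcw
  -- the cycle as a finset
  set C : Finset (Fin n) := (Finset.range s).image (fun a => g a) with hCdef
  have hCcard : C.card = s := by
    rw [hCdef, Finset.card_image_of_injOn, Finset.card_range]
    intro a ha b hb heq
    simp only [Finset.coe_range, Set.mem_Iio] at ha hb
    exact hinj a b ha hb heq
  have hsn : s ≤ n := by
    have := Finset.card_le_univ C
    simpa [hCcard] using this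
  -- exclude s = n
  have hsn1 : s ≤ n - 1 := by
    rcases Nat.lt_or_ge s n with h | h
    · omega
    exfalso
    have hCuniv : ∀ y : Fin n, ∃ q, q < s ∧ g q = y := by
      intro y
      have hCu : C = Finset.univ :=
        Finset.eq_univ_of_card _ (by rw [hCcard]; simp; omega)
      have hy : y ∈ C := hCu ▸ Finset.mem_univ y
      rw [hCdef, Finset.mem_image] at hy
      obtain ⟨q, hq, hgq⟩ := hy
      exact ⟨q, Finset.mem_range.1 hq, hgq⟩
    -- every edge out of g p goes to g ((p+1) % s)
    have hsucc : ∀ p y, p < s → 0 < A (g p) y → y = g ((p + 1) % s) := by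
      intro p y hp hedge
      obtain ⟨q, hq, hgq⟩ := hCuniv y
      set d := (p + s - q) % s with hd
      have hdlt : d < s := Nat.mod_lt _ hs1
      have hqd : (q + d) % s = p := by
        rw [hd, Nat.add_mod_mod, show q + (p + s - q) = p + s by omega,
          Nat.add_mod_right, Nat.mod_eq_of_lt hp]
      have hcw : 0 < (A ^ (d + 1)) y y := by
        refine (W_add hpos).2 ⟨g p, ?_, by rwa [pow_one]⟩
        have := cycle_walk hs1 hgs0 hgstep hpos q d hq
        rwa [hqd, hgq] at this
      have hds : ¬ (d + 1 < s) := fun hlt => hmin (d + 1) (by omega) hlt y hcw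
      have hdeq : d = s - 1 := by omega
      have hpq : (p + 1) % s = q := by
        rw [← hqd, Nat.mod_add_mod, hdeq, show q + (s - 1) + 1 = q + s by omega,
          Nat.add_mod_right, Nat.mod_eq_of_lt hq]
      rw [hpq]
      exact hgq.symm
    -- walks from cycle vertices are fully determined
    have hdet : ∀ m p j, p < s → 0 < (A ^ m) (g p) j → j = g ((p + m) % s) := by
      intro m
      induction m with
      | zero =>
        intro p j hp h
        rw [Nat.add_zero, Nat.mod_eq_of_lt hp]
        exact (W_zero.1 h).symm
      | succ m ih =>
        intro p j hp h
        rw [show m + 1 = 1 + m by omega, W_add hpos] at h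
        obtain ⟨u, h1, hm⟩ := h
        rw [pow_one] at h1
        have hu : u = g ((p + 1) % s) := hsucc p u hp h1
        have hj := ih ((p + 1) % s) j (Nat.mod_lt _ hs1) (hu ▸ hm)
        rw [hj, Nat.mod_add_mod]
        congr 2
        omega
    have hall : ∀ j : Fin n, j = g ((0 + k) % s) := by
      intro j
      exact hdet k 0 j hs1 (by rw [hg0]; exact hk v j)
    have e1 := hall ⟨0, by omega⟩
    have e2 := hall ⟨1, by omega⟩
    have : (⟨0, by omega⟩ : Fin n) = ⟨1, by omega⟩ := e1.trans e2.symm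
    rw [Fin.ext_iff] at this
    simp at this
  -- the main construction, for every pair
  have hMall : ∀ i j, 0 < (A ^ ((n - s) + s * (n - 1))) i j := by
    intro i j
    -- Step 1: reach the cycle from i in exactly n - s steps
    have hvC : v ∈ C := by
      rw [hCdef, Finset.mem_image]
      exact ⟨0, Finset.mem_range.2 hs1, hg0⟩
    have hT1ex : ∃ t, ∃ w, w ∈ C ∧ 0 < (A ^ t) i w := ⟨k, v, hvC, hk i v⟩
    set t0 := Nat.find hT1ex with ht0def
    obtain ⟨w, hwC, hw⟩ := Nat.find_spec hT1ex
    have ht0min : ∀ t, t < t0 → ¬ ∃ w, w ∈ C ∧ 0 < (A ^ t) i w :=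
      fun t ht => Nat.find_min hT1ex ht
    have ht0 : t0 ≤ n - s := by
      by_contra hgt
      push_neg at hgt
      obtain ⟨f, hf0, hft, hfs⟩ := walk_of_W hpos hw
      have hnotC : ∀ a, a < t0 → f a ∉ C := by
        intro a ha hmem
        exact ht0min a ha ⟨f a, hmem,
          W_of_walk hpos f hf0 rfl (fun x hx => hfs x (by omega))⟩
      have hmaps : ∀ a ∈ Finset.range t0, f a ∈ Finset.univ \ C := by
        intro a ha
        rw [Finset.mem_sdiff]
        exact ⟨Finset.mem_univ _, hnotC a (Finset.mem_range.1 ha)⟩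
      have hcardlt : (Finset.univ \ C).card < (Finset.range t0).card := by
        rw [Finset.card_sdiff_of_subset (Finset.subset_univ _), Finset.card_range, hCcard]
        simp
        omega
      obtain ⟨a, ha, b, hb, hne, heq⟩ :=
        Finset.exists_ne_map_eq_of_card_lt_of_maps_to hcardlt hmaps
      rw [Finset.mem_range] at ha hb
      have key : ∀ a b, a < b → b < t0 → f a = f b → False := by
        intro a b hab hbt heq
        obtain ⟨g', hg'0, hg'e, hg's⟩ := splice hab (Nat.le_of_lt hbt) heq hfs
        exact ht0min (t0 - (b - a)) (by omega)
          ⟨w, hwC, W_of_walk hpos g' (by rw [hg'0, hf0]) (by rw [hg'e, hft]) hg's⟩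
      rcases Nat.lt_or_ge a b with h | h
      · exact key a b h hb heq
      · exact key b a (by omega) ha heq.symm
    obtain ⟨p, hp, hgp⟩ : ∃ p, p < s ∧ g p = w := by
      rw [hCdef, Finset.mem_image] at hwC
      obtain ⟨p, hp, hgp⟩ := hwC
      exact ⟨p, Finset.mem_range.1 hp, hgp⟩
    set p' := (p + (n - s - t0)) % s with hp'def
    have hp' : p' < s := Nat.mod_lt _ hs1
    set w' := g p' with hw'def
    have hstep1 : 0 < (A ^ (n - s)) i w' := by
      rw [show n - s = t0 + (n - s - t0) by omega, W_add hpos]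
      refine ⟨w, hw, ?_⟩
      have := cycle_walk hs1 hgs0 hgstep hpos p (n - s - t0) hp
      rwa [hgp] at this
    -- Step 2: from w' to j in exactly s * (n-1) steps
    have hloop : 0 < (A ^ s) w' w' := by
      have := cycle_walk hs1 hgs0 hgstep hpos p' s hp'
      rwa [Nat.add_mod_right, Nat.mod_eq_of_lt hp'] at this
    have hBpos : ∀ x y, 0 ≤ (A ^ s) x y := fun x y => nn hpos s x y
    have hBpow : ∀ T, (A ^ s) ^ T = A ^ (s * T) := fun T => by rw [← pow_mul]
    have hT2ex : ∃ T, 0 < ((A ^ s) ^ T) w' j := by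
      refine ⟨k, ?_⟩
      rw [hBpow]
      exact mono hpos hk1 hk hk (Nat.le_mul_of_pos_left k hs1) w' j
    set T0 := Nat.find hT2ex with hT0def
    have hT0spec := Nat.find_spec hT2ex
    have hT0min : ∀ T, T < T0 → ¬ 0 < ((A ^ s) ^ T) w' j :=
      fun T hT => Nat.find_min hT2ex hT
    have hT0n : T0 ≤ n - 1 := by
      by_contra hgt
      push_neg at hgt
      obtain ⟨F, hF0, hFT, hFs⟩ := walk_of_W hBpos hT0spec
      have hmaps : ∀ a ∈ Finset.range (T0 + 1), F a ∈ (Finset.univ : Finset (Fin n)) :=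
        fun a _ => Finset.mem_univ _
      have hcardlt : (Finset.univ : Finset (Fin n)).card < (Finset.range (T0 + 1)).card := by
        rw [Finset.card_range]
        simp
        omega
      obtain ⟨a, ha, b, hb, hne, heq⟩ :=
        Finset.exists_ne_map_eq_of_card_lt_of_maps_to hcardlt hmaps
      rw [Finset.mem_range] at ha hb
      have key : ∀ a b, a < b → b ≤ T0 → F a = F b → False := by
        intro a b hab hbt heq
        obtain ⟨G, hG0, hGe, hGs⟩ := splice hab hbt heq hFs
        exact hT0min (T0 - (b - a)) (by omega)
          (W_of_walk hBpos G (by rw [hG0, hF0]) (by rw [hGe, hFT]) hGs)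
      rcases Nat.lt_or_ge a b with h | h
      · exact key a b h (by omega) heq
      · exact key b a (by omega) (by omega) heq.symm
    have hstep2 : 0 < (A ^ (s * (n - 1))) w' j := by
      have hsplit : s * (n - 1) = s * (n - 1 - T0) + s * T0 := by
        rw [← Nat.mul_add]
        congr 1
        omega
      rw [hsplit, W_add hpos]
      exact ⟨w', loop_pow hpos hloop (n - 1 - T0), by rw [← hBpow]; exact hT0spec⟩
    exact (W_add hpos).2 ⟨w', hstep1, hstep2⟩
  -- conclude by monotonicity
  have hle : (n - s) + s * (n - 1) ≤ (n - 1) ^ 2 + 1 := by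
    obtain ⟨e, he⟩ : ∃ e, n - 1 = s + e := ⟨n - 1 - s, by omega⟩
    have h1 : n - s = e + 1 := by omega
    rw [h1, he]
    nlinarith [hs1]
  exact mono hpos hk1 hk hMall hle

end WielandtAux

theorem wielandt_primitivity (n : ℕ) (A : Matrix (Fin n) (Fin n) ℝ)
    (hpos : ∀ i j, 0 ≤ A i j)
    (hprim : ∃ k : ℕ, 0 < k ∧ ∀ i j, 0 < (A ^ k) i j) :
    ∀ i j, 0 < (A ^ ((n - 1) ^ 2 + 1)) i j := by
  obtain ⟨k, hk1, hk⟩ := hprim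
  match n, A, hpos, hk with
  | 0, A, hpos, hk => intro i j; exact i.elim0
  | 1, A, hpos, hk =>
    intro i j
    have h := hk i j
    rw [show k = 1 + (k - 1) by omega, WielandtAux.W_add hpos] at h
    obtain ⟨u, h1, _⟩ := h
    rw [pow_one] at h1
    simpa using (by rwa [Subsingleton.elim u j] at h1 : 0 < A i j)
  | (m + 2), A, hpos, hk =>
    exact WielandtAux.main (by omega) hpos hk1 hk
end

section
/- Friedland's diagonal completion theorem: Let F be an algebraically closed field, let the off-diagonal entries of an n×n matrix over F be prescribed arbitrarily, and let λ_1,…,λ_n ∈ F. Then there exist diagonal entries a_1,…,a_n ∈ F such that the resulting matrix has characteristic polynomial ∏ᵢ (x − λ_i), i.e., eigenvalues λ_1,…,λ_n. -/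
/- Proof of Friedland's diagonal completion theorem.

Strategy: let `c_1, …, c_n` be the (sign-normalized) coefficients of the characteristic
polynomial of the "generic" completion (with the diagonal replaced by variables), viewed as
multivariate polynomials in the diagonal entries.  Each `c_k` equals the `k`-th elementary
symmetric polynomial plus terms of total degree `< k`.  Hence (1) the `c_k` are algebraically
independent (reduce, by taking top weighted-homogeneous parts, to the algebraic independence
of the elementary symmetric polynomials, i.e. the fundamental theorem of symmetric
polynomials), and (2) the polynomial ring is a finite module over the subalgebra generated by
the `c_k` (using that each variable is a root of `∏ (t - xᵢ)`, whose coefficients are the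
elementary symmetric polynomials, and a strong induction on total degree).  By lying over and
the Nullstellensatz, every prescribed value vector of the `c_k` is attained at some point. -/

namespace Friedland

open MvPolynomial

section DegreeHelpers
variable {σ : Type*} {R : Type*} [CommRing R]

/-- `p` is zero or has total degree `< m`. -/
def Dlt (p : MvPolynomial σ R) (m : ℕ) : Prop := p = 0 ∨ p.totalDegree < m

lemma Dlt.zero (m : ℕ) : Dlt (0 : MvPolynomial σ R) m := Or.inl rfl

lemma Dlt.of_lt {p : MvPolynomial σ R} {m k : ℕ} (h : Dlt p m) (hmk : m ≤ k) : Dlt p k :=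
  h.imp id fun h' => lt_of_lt_of_le h' hmk

lemma Dlt.add {p q : MvPolynomial σ R} {m : ℕ} (hp : Dlt p m) (hq : Dlt q m) :
    Dlt (p + q) m := by
  rcases hp with rfl | hp
  · simpa using hq
  rcases hq with rfl | hq
  · rw [add_zero]; exact Or.inr hp
  exact Or.inr (lt_of_le_of_lt (totalDegree_add p q) (max_lt hp hq))

lemma Dlt.neg {p : MvPolynomial σ R} {m : ℕ} (hp : Dlt p m) : Dlt (-p) m := by
  rcases hp with rfl | hp
  · simpa using Dlt.zero m
  · exact Or.inr (by rwa [totalDegree_neg])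

lemma Dlt.sum {ι : Type*} {s : Finset ι} {f : ι → MvPolynomial σ R} {m : ℕ}
    (h : ∀ i ∈ s, Dlt (f i) m) : Dlt (∑ i ∈ s, f i) m := by
  classical
  induction s using Finset.cons_induction with
  | empty => simpa using Dlt.zero m
  | cons a s ha ih =>
    rw [Finset.sum_cons]
    exact (h a (Finset.mem_cons_self a s)).add (ih fun i hi => h i (Finset.mem_cons_of_mem hi))

lemma Dlt.mul_dle {p q : MvPolynomial σ R} {m t : ℕ} (hp : Dlt p m) (hq : q.totalDegree ≤ t) :
    Dlt (p * q) (m + t) := by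
  rcases hp with rfl | hp
  · simpa using Dlt.zero _
  by_cases h0 : p * q = 0
  · exact Or.inl h0
  refine Or.inr (lt_of_le_of_lt (totalDegree_mul p q) ?_)
  omega

lemma dle_mul_dlt {p q : MvPolynomial σ R} {s m : ℕ} (hp : p.totalDegree ≤ s) (hq : Dlt q m) :
    Dlt (p * q) (s + m) := by
  rcases hq with rfl | hq
  · simpa using Dlt.zero _
  by_cases h0 : p * q = 0
  · exact Or.inl h0
  refine Or.inr (lt_of_le_of_lt (totalDegree_mul p q) ?_)
  omega

/-- telescoping: products of factors that agree up to lower-degree terms agree up to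
lower-degree terms. -/
lemma dlt_prod_sub_prod {ι : Type*} (s : Finset ι) (f g : ι → MvPolynomial σ R) (D : ι → ℕ)
    (hf : ∀ i ∈ s, (f i).totalDegree ≤ D i) (hg : ∀ i ∈ s, (g i).totalDegree ≤ D i)
    (hfg : ∀ i ∈ s, Dlt (f i - g i) (D i)) :
    Dlt (∏ i ∈ s, f i - ∏ i ∈ s, g i) (∑ i ∈ s, D i) := by
  classical
  induction s using Finset.cons_induction with
  | empty => simpa using Dlt.zero 0
  | cons a s ha ih =>
    rw [Finset.prod_cons, Finset.prod_cons, Finset.sum_cons]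
    have key : f a * ∏ i ∈ s, f i - g a * ∏ i ∈ s, g i
        = (f a - g a) * ∏ i ∈ s, f i + g a * (∏ i ∈ s, f i - ∏ i ∈ s, g i) := by ring
    rw [key]
    have h1 : Dlt ((f a - g a) * ∏ i ∈ s, f i) (D a + ∑ i ∈ s, D i) :=
      (hfg a (Finset.mem_cons_self a s)).mul_dle
        ((totalDegree_finset_prod s f).trans
          (Finset.sum_le_sum fun i hi => hf i (Finset.mem_cons_of_mem hi)))
    have h2 : Dlt (g a * (∏ i ∈ s, f i - ∏ i ∈ s, g i)) (D a + ∑ i ∈ s, D i) :=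
      dle_mul_dlt (hg a (Finset.mem_cons_self a s))
        (ih (fun i hi => hf i (Finset.mem_cons_of_mem hi))
          (fun i hi => hg i (Finset.mem_cons_of_mem hi))
          (fun i hi => hfg i (Finset.mem_cons_of_mem hi)))
    exact h1.add h2

lemma dlt_pow_sub_pow {p q : MvPolynomial σ R} {D : ℕ} (hp : p.totalDegree ≤ D)
    (hq : q.totalDegree ≤ D) (hpq : Dlt (p - q) D) (e : ℕ) :
    Dlt (p ^ e - q ^ e) (e * D) := by
  have := dlt_prod_sub_prod (Finset.range e) (fun _ => p) (fun _ => q) (fun _ => D)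
    (fun _ _ => hp) (fun _ _ => hq) (fun _ _ => hpq)
  simpa [Finset.prod_const, Finset.sum_const, Finset.card_range, mul_comm] using this


/-- coefficientwise total-degree bound for a polynomial over a polynomial ring:
`P` has `(X,a)`-total degree `≤ t`. -/
def PDle (P : Polynomial (MvPolynomial σ R)) (t : ℕ) : Prop :=
  ∀ j, P.coeff j = 0 ∨ (P.coeff j).totalDegree + j ≤ t

lemma PDle.mul {P Q : Polynomial (MvPolynomial σ R)} {s t : ℕ}
    (hP : PDle P s) (hQ : PDle Q t) : PDle (P * Q) (s + t) := by
  intro j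
  by_cases hj : s + t < j
  · left
    rw [Polynomial.coeff_mul]
    apply Finset.sum_eq_zero
    intro x hx
    rw [Finset.HasAntidiagonal.mem_antidiagonal] at hx
    rcases hP x.1 with h1 | h1
    · rw [h1, zero_mul]
    rcases hQ x.2 with h2 | h2
    · rw [h2, mul_zero]
    · omega
  · have hb : ((P * Q).coeff j).totalDegree ≤ s + t - j := by
      rw [Polynomial.coeff_mul]
      refine (totalDegree_finset_sum _ _).trans (Finset.sup_le ?_)
      intro x hx
      rw [Finset.HasAntidiagonal.mem_antidiagonal] at hx
      rcases hP x.1 with h1 | h1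
      · simp [h1]
      rcases hQ x.2 with h2 | h2
      · simp [h2]
      refine (totalDegree_mul _ _).trans ?_
      omega
    right
    omega

lemma PDle.one : PDle (1 : Polynomial (MvPolynomial σ R)) 0 := by
  intro j
  rcases eq_or_ne j 0 with rfl | hj
  · simp [Polynomial.coeff_one]
  · simp [Polynomial.coeff_one, hj]

lemma PDle.prod {ι : Type*} (s : Finset ι) (f : ι → Polynomial (MvPolynomial σ R)) (t : ι → ℕ)
    (h : ∀ i ∈ s, PDle (f i) (t i)) : PDle (∏ i ∈ s, f i) (∑ i ∈ s, t i) := by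
  classical
  induction s using Finset.cons_induction with
  | empty => simpa using PDle.one
  | cons a s ha ih =>
    rw [Finset.prod_cons, Finset.sum_cons]
    exact (h a (Finset.mem_cons_self a s)).mul
      (ih fun i hi => h i (Finset.mem_cons_of_mem hi))

lemma PDle_X_sub_C [Nontrivial R] (i : σ) :
    PDle (Polynomial.X - Polynomial.C (X i : MvPolynomial σ R)) 1 := by
  intro j
  match j with
  | 0 => right; simp [totalDegree_neg, totalDegree_X]
  | 1 => right; simp [Polynomial.coeff_X_one]
  | (m+2) => left; simp [Polynomial.coeff_X, Polynomial.coeff_C]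

lemma PDle_neg_C (b : R) :
    PDle (-(Polynomial.C (C b : MvPolynomial σ R))) 0 := by
  intro j
  rcases eq_or_ne j 0 with rfl | hj
  · right; simp [totalDegree_neg]
  · left; simp [Polynomial.coeff_C, hj]


end DegreeHelpers

section Main
variable {F : Type*} [Field F] {n : ℕ}

/-- The generic completion: a matrix over `F[x_1,…,x_n]` with variable diagonal. -/
noncomputable def Mgen (B : Matrix (Fin n) (Fin n) F) :
    Matrix (Fin n) (Fin n) (MvPolynomial (Fin n) F) :=
  Matrix.of fun i j => if i = j then X i else C (B i j)

/-- Its characteristic polynomial. -/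
noncomputable def chi (B : Matrix (Fin n) (Fin n) F) : Polynomial (MvPolynomial (Fin n) F) :=
  (Mgen B).charpoly

/-- The (sign-normalized) coefficients of `chi` as polynomials in the diagonal variables. -/
noncomputable def cc (B : Matrix (Fin n) (Fin n) F) (k : Fin n) : MvPolynomial (Fin n) F :=
  (-1) ^ ((k : ℕ) + 1) * (chi B).coeff (n - ((k : ℕ) + 1))

/-- Elementary symmetric polynomials indexed suitably. -/
noncomputable def es (F : Type*) [Field F] (n : ℕ) (k : Fin n) : MvPolynomial (Fin n) F :=
  esymm (Fin n) F ((k : ℕ) + 1)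

lemma Tid_eq (F : Type*) [Field F] (n : ℕ) :
    (∏ i : Fin n, (Polynomial.X - Polynomial.C (X i : MvPolynomial (Fin n) F))) =
      ((Finset.univ.val.map (X : Fin n → MvPolynomial (Fin n) F)).map
        fun t => Polynomial.X - Polynomial.C t).prod := by
  rw [Multiset.map_map]
  rfl

lemma vieta_coeff {m : ℕ} (F : Type*) [Field F] (n : ℕ) (hm : m ≤ n) :
    (∏ i : Fin n, (Polynomial.X - Polynomial.C (X i : MvPolynomial (Fin n) F))).coeff (n - m) =
      (-1) ^ m * esymm (Fin n) F m := by
  have hcard : Multiset.card (Finset.univ.val.map (X : Fin n → MvPolynomial (Fin n) F)) = n := by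
    simp
  rw [Tid_eq, Multiset.prod_X_sub_C_coeff _ (le_of_le_of_eq (Nat.sub_le n m) hcard.symm)]
  rw [hcard, Nat.sub_sub_self hm, ← esymm_eq_multiset_esymm]

lemma Tid_monic (F : Type*) [Field F] (n : ℕ) :
    (∏ i : Fin n, (Polynomial.X - Polynomial.C (X i : MvPolynomial (Fin n) F))).Monic :=
  Polynomial.monic_prod_of_monic _ _ fun i _ => Polynomial.monic_X_sub_C _

lemma Tid_natDegree (F : Type*) [Field F] (n : ℕ) :
    (∏ i : Fin n, (Polynomial.X - Polynomial.C (X i : MvPolynomial (Fin n) F))).natDegree = n := by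
  rw [Polynomial.natDegree_prod _ _ fun i _ => (Polynomial.monic_X_sub_C _).ne_zero]
  simp [Polynomial.natDegree_X_sub_C]


lemma charmatrix_Mgen_eq (B : Matrix (Fin n) (Fin n) F) (i : Fin n) :
    (Matrix.charmatrix (Mgen B)) i i = Polynomial.X - Polynomial.C (X i) := by
  rw [Matrix.charmatrix_apply_eq, Mgen, Matrix.of_apply, if_pos rfl]

lemma charmatrix_Mgen_ne (B : Matrix (Fin n) (Fin n) F) {i j : Fin n} (h : i ≠ j) :
    (Matrix.charmatrix (Mgen B)) i j = -(Polynomial.C (C (B i j))) := by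
  rw [Matrix.charmatrix_apply_ne _ _ _ h, Mgen, Matrix.of_apply, if_neg h]

lemma PDle_perm (B : Matrix (Fin n) (Fin n) F) (sp : Equiv.Perm (Fin n)) :
    PDle (∏ i, (Matrix.charmatrix (Mgen B)) (sp i) i)
      (∑ i, if sp i = i then 1 else 0) := by
  refine PDle.prod _ _ _ fun i _ => ?_
  by_cases hi : sp i = i
  · rw [hi, if_pos rfl, charmatrix_Mgen_eq]
    exact PDle_X_sub_C i
  · rw [if_neg hi, charmatrix_Mgen_ne B hi]
    exact PDle_neg_C _

lemma chi_coeff_split (B : Matrix (Fin n) (Fin n) F) {m : ℕ} (hm1 : 1 ≤ m) (hmn : m ≤ n) :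
    (chi B).coeff (n - m) = (-1) ^ m * esymm (Fin n) F m +
      ∑ sp ∈ Finset.univ.erase (1 : Equiv.Perm (Fin n)),
        ((Equiv.Perm.sign sp) • ∏ i, (Matrix.charmatrix (Mgen B)) (sp i) i).coeff (n - m) := by
  have hdet : chi B = ∑ sp : Equiv.Perm (Fin n),
      (Equiv.Perm.sign sp) • ∏ i, (Matrix.charmatrix (Mgen B)) (sp i) i := by
    rw [chi, Matrix.charpoly, Matrix.det_apply]
  rw [hdet, Polynomial.finset_sum_coeff,
    ← Finset.add_sum_erase _ _ (Finset.mem_univ (1 : Equiv.Perm (Fin n)))]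
  congr 1
  have h1 : (Equiv.Perm.sign (1 : Equiv.Perm (Fin n))) •
      (∏ i, (Matrix.charmatrix (Mgen B)) ((1 : Equiv.Perm (Fin n)) i) i) =
      ∏ i : Fin n, (Polynomial.X - Polynomial.C (X i : MvPolynomial (Fin n) F)) := by
    rw [map_one, one_smul]
    exact Finset.prod_congr rfl fun i _ => by
      rw [Equiv.Perm.one_apply, charmatrix_Mgen_eq]
  rw [h1, vieta_coeff F n hmn]

lemma dlt_term (B : Matrix (Fin n) (Fin n) F) {m : ℕ} (hm1 : 1 ≤ m) (hmn : m ≤ n)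
    {sp : Equiv.Perm (Fin n)} (hsp : sp ≠ 1) :
    Dlt (((Equiv.Perm.sign sp) • ∏ i, (Matrix.charmatrix (Mgen B)) (sp i) i).coeff (n - m)) m := by
  have hsupp : (∑ i, if sp i = i then 1 else 0) = n - sp.support.card := by
    rw [← Finset.card_filter]
    have h2 : sp.support = Finset.univ.filter fun i => ¬ (sp i = i) := by
      ext i
      simp [Equiv.Perm.mem_support]
    rw [h2]
    have h3 := Finset.card_filter_add_card_filter_not
      (s := (Finset.univ : Finset (Fin n))) (p := fun i => sp i = i)
    simp only [Finset.card_univ, Fintype.card_fin] at h3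
    omega
  have hcard : 1 ≤ sp.support.card := by
    rw [Nat.one_le_iff_ne_zero, Ne, Finset.card_eq_zero, Equiv.Perm.support_eq_empty_iff]
    exact hsp
  have hP := PDle_perm B sp
  rw [hsupp] at hP
  have key : Dlt ((∏ i, (Matrix.charmatrix (Mgen B)) (sp i) i).coeff (n - m)) m := by
    rcases hP (n - m) with h0 | hle
    · exact Or.inl h0
    · exact Or.inr (by omega)
  rw [Polynomial.coeff_smul]
  rcases Int.units_eq_one_or (Equiv.Perm.sign sp) with h | h <;> rw [h]
  · simpa using key
  · have : ((-1 : ℤˣ) • ((∏ i, (Matrix.charmatrix (Mgen B)) (sp i) i).coeff (n - m)))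
        = -((∏ i, (Matrix.charmatrix (Mgen B)) (sp i) i).coeff (n - m)) := by
      rw [Units.smul_def]
      norm_num
    rw [this]
    exact key.neg

lemma dlt_cc_sub_es (B : Matrix (Fin n) (Fin n) F) (k : Fin n) :
    Dlt (cc B k - es F n k) ((k : ℕ) + 1) := by
  set m : ℕ := (k : ℕ) + 1 with hm
  have hm1 : 1 ≤ m := Nat.le_add_left 1 _
  have hmn : m ≤ n := k.isLt
  have heq : cc B k - es F n k = (-1) ^ m *
      ∑ sp ∈ Finset.univ.erase (1 : Equiv.Perm (Fin n)),
        ((Equiv.Perm.sign sp) • ∏ i, (Matrix.charmatrix (Mgen B)) (sp i) i).coeff (n - m) := by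
    rw [cc, es, chi_coeff_split B hm1 hmn, mul_add, ← mul_assoc, ← mul_pow, neg_mul_neg, one_mul,
      one_pow, one_mul]
    exact add_sub_cancel_left _ _
  rw [heq]
  have hdeg : ((-1 : MvPolynomial (Fin n) F) ^ m).totalDegree ≤ 0 :=
    le_trans (totalDegree_pow _ _) (by simp [totalDegree_neg])
  have hsum : Dlt (∑ sp ∈ Finset.univ.erase (1 : Equiv.Perm (Fin n)),
      ((Equiv.Perm.sign sp) • ∏ i, (Matrix.charmatrix (Mgen B)) (sp i) i).coeff (n - m)) m :=
    Dlt.sum fun sp hsp => dlt_term B hm1 hmn (Finset.mem_erase.mp hsp).1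
  simpa using dle_mul_dlt hdeg hsum


/-- the weighted degree on exponents, with variable `k` given weight `k+1`. -/
def wdeg {n : ℕ} (α : Fin n →₀ ℕ) : ℕ := α.sum fun i e => ((i : ℕ) + 1) * e

lemma esymm_isHomog (m : ℕ) : (esymm (Fin n) F m).IsHomogeneous m := by
  refine IsHomogeneous.sum _ _ _ fun t ht => ?_
  have : IsHomogeneous (∏ i ∈ t, (X i : MvPolynomial (Fin n) F)) (∑ _i ∈ t, 1) :=
    IsHomogeneous.prod _ _ _ fun i _ => isHomogeneous_X _ _
  simpa [(Finset.mem_powersetCard.mp ht).2] using this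

lemma es_isHomog (k : Fin n) : (es F n k).IsHomogeneous ((k : ℕ) + 1) := esymm_isHomog _

lemma prod_es_homog (α : Fin n →₀ ℕ) :
    (α.prod fun i e => es F n i ^ e).IsHomogeneous (wdeg α) := by
  simp only [Finsupp.prod, wdeg, Finsupp.sum]
  exact IsHomogeneous.prod _ _ (fun i : Fin n => ((i : ℕ) + 1) * α i) fun i _ => (es_isHomog i).pow (α i)

lemma dle_es (k : Fin n) : (es F n k).totalDegree ≤ (k : ℕ) + 1 :=
  (es_isHomog k).totalDegree_le

lemma dle_cc (B : Matrix (Fin n) (Fin n) F) (k : Fin n) :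
    (cc B k).totalDegree ≤ (k : ℕ) + 1 := by
  have h : cc B k = es F n k + (cc B k - es F n k) := by ring
  rw [h]
  refine (totalDegree_add _ _).trans (max_le (dle_es k) ?_)
  rcases dlt_cc_sub_es B k with h0 | hlt
  · simp [h0]
  · exact hlt.le

lemma dle_prod_cc (B : Matrix (Fin n) (Fin n) F) (α : Fin n →₀ ℕ) :
    (α.prod fun i e => cc B i ^ e).totalDegree ≤ wdeg α := by
  refine (totalDegree_finset_prod _ _).trans ?_
  refine Finset.sum_le_sum fun i _ => ?_
  calc ((cc B i ^ α i).totalDegree) ≤ α i * (cc B i).totalDegree := totalDegree_pow _ _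
    _ ≤ α i * ((i : ℕ) + 1) := Nat.mul_le_mul_left _ (dle_cc B i)
    _ = ((i : ℕ) + 1) * α i := Nat.mul_comm _ _

lemma dlt_prod_cc_sub_prod_es (B : Matrix (Fin n) (Fin n) F) (α : Fin n →₀ ℕ) :
    Dlt ((α.prod fun i e => cc B i ^ e) - (α.prod fun i e => es F n i ^ e)) (wdeg α) := by
  refine dlt_prod_sub_prod α.support _ _ (fun i => ((i : ℕ) + 1) * α i)
    (fun i _ => ?_) (fun i _ => ?_) (fun i _ => ?_)
  · calc ((cc B i ^ α i).totalDegree) ≤ α i * (cc B i).totalDegree := totalDegree_pow _ _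
      _ ≤ ((i : ℕ) + 1) * α i := by
          have := dle_cc B i; nlinarith [Nat.mul_le_mul_left (α i) (dle_cc B i)]
  · calc ((es F n i ^ α i).totalDegree) ≤ α i * (es F n i).totalDegree := totalDegree_pow _ _
      _ ≤ ((i : ℕ) + 1) * α i := by nlinarith [Nat.mul_le_mul_left (α i) (dle_es (F := F) i)]
  · have := dlt_pow_sub_pow (dle_cc B i) (dle_es (F := F) i) (dlt_cc_sub_es B i) (α i)
    rwa [Nat.mul_comm] at this

lemma aeval_es_injective :
    Function.Injective (aeval (es F n) : MvPolynomial (Fin n) F →ₐ[F] MvPolynomial (Fin n) F) := by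
  have h := esymmAlgHom_fin_injective F (le_rfl : n ≤ n)
  intro p q hpq
  apply h
  have hv : ((esymmAlgHom (Fin n) F n) p).val = ((esymmAlgHom (Fin n) F n) q).val := by
    rw [esymmAlgHom_apply, esymmAlgHom_apply]
    exact hpq
  exact Subtype.coe_injective hv

lemma aeval_cc_injective (B : Matrix (Fin n) (Fin n) F) :
    Function.Injective (aeval (cc B) : MvPolynomial (Fin n) F →ₐ[F] MvPolynomial (Fin n) F) := by
  rw [injective_iff_map_eq_zero]
  intro p hp
  by_contra hp0
  set d := p.support.sup wdeg with hd
  set q : MvPolynomial (Fin n) F :=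
    ∑ α ∈ p.support.filter fun α => wdeg α = d, monomial α (coeff α p) with hq
  have hsupne : p.support.Nonempty := support_nonempty.mpr hp0
  obtain ⟨α₀, hα₀mem, hα₀⟩ := Finset.exists_mem_eq_sup _ hsupne wdeg
  have hq0 : q ≠ 0 := by
    have hcq : coeff α₀ q = coeff α₀ p := by
      rw [hq, coeff_sum]
      rw [Finset.sum_eq_single α₀]
      · simp [coeff_monomial]
      · intro β hβ hβne
        simp [coeff_monomial, hβne]
      · intro hnot
        exact absurd (Finset.mem_filter.mpr ⟨hα₀mem, hα₀.symm⟩) hnot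
    intro h
    rw [h, coeff_zero] at hcq
    exact mem_support_iff.mp hα₀mem hcq.symm
  have haq : (aeval (es F n) q).IsHomogeneous d := by
    rw [hq, map_sum]
    refine IsHomogeneous.sum _ _ _ fun α hα => ?_
    rw [aeval_monomial]
    have h1 := prod_es_homog (F := F) α
    have hwα : wdeg α = d := (Finset.mem_filter.mp hα).2
    rw [hwα] at h1
    simpa [algebraMap_eq] using (isHomogeneous_C (Fin n) (coeff α p)).mul h1
  have hPexp : aeval (cc B) p
      = ∑ α ∈ p.support, C (coeff α p) * (α.prod fun i e => cc B i ^ e) := by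
    conv_lhs => rw [p.as_sum]
    rw [map_sum]
    exact Finset.sum_congr rfl fun α _ => by rw [aeval_monomial, algebraMap_eq]
  have hQexp : aeval (es F n) q
      = ∑ α ∈ p.support.filter fun α => wdeg α = d,
          C (coeff α p) * (α.prod fun i e => es F n i ^ e) := by
    rw [hq, map_sum]
    exact Finset.sum_congr rfl fun α _ => by rw [aeval_monomial, algebraMap_eq]
  have heq : aeval (cc B) p - aeval (es F n) q
      = (∑ α ∈ p.support.filter fun α => wdeg α = d, C (coeff α p) *
          ((α.prod fun i e => cc B i ^ e) - (α.prod fun i e => es F n i ^ e)))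
        + ∑ α ∈ p.support.filter fun α => ¬ wdeg α = d,
            C (coeff α p) * (α.prod fun i e => cc B i ^ e) := by
    have h1 : ∑ α ∈ p.support.filter fun α => wdeg α = d, C (coeff α p) *
          ((α.prod fun i e => cc B i ^ e) - (α.prod fun i e => es F n i ^ e))
        = (∑ α ∈ p.support.filter fun α => wdeg α = d,
            C (coeff α p) * (α.prod fun i e => cc B i ^ e))
          - ∑ α ∈ p.support.filter fun α => wdeg α = d,
              C (coeff α p) * (α.prod fun i e => es F n i ^ e) := by
      rw [← Finset.sum_sub_distrib]
      exact Finset.sum_congr rfl fun α _ => mul_sub _ _ _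
    rw [hPexp, hQexp, ← Finset.sum_filter_add_sum_filter_not p.support
      (fun α => wdeg α = d), h1]
    ring
  have hE : Dlt (aeval (cc B) p - aeval (es F n) q) d := by
    rw [heq]
    refine Dlt.add (Dlt.sum fun α hα => ?_) (Dlt.sum fun α hα => ?_)
    · have hwα : wdeg α = d := (Finset.mem_filter.mp hα).2
      have := dle_mul_dlt (le_of_eq (totalDegree_C (coeff α p)))
        (hwα ▸ dlt_prod_cc_sub_prod_es B α)
      simpa using this
    · have hlt : wdeg α < d := by
        have hle : wdeg α ≤ d := Finset.le_sup (Finset.mem_filter.mp hα).1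
        exact lt_of_le_of_ne hle (Finset.mem_filter.mp hα).2
      refine Or.inr (lt_of_le_of_lt ((totalDegree_mul _ _).trans ?_) hlt)
      rw [totalDegree_C, Nat.zero_add]
      exact dle_prod_cc B α
  have hq' : aeval (es F n) q ≠ 0 := by
    intro h
    exact hq0 (aeval_es_injective (by simpa using h))
  have hsum0 : aeval (es F n) q = -(aeval (cc B) p - aeval (es F n) q) := by
    rw [hp]
    ring
  rcases hE with h0 | hlt
  · exact hq' (by rw [hsum0, h0, neg_zero])
  · have hdeg := haq.totalDegree hq'
    rw [hsum0, totalDegree_neg] at hdeg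
    omega

/-- The key monic relation: each variable is a root of `∏ (t - X j)`. -/
lemma Xi_pow (i : Fin n) :
    (X i : MvPolynomial (Fin n) F) ^ n
      = - ∑ j ∈ Finset.range n,
          (∏ l : Fin n, (Polynomial.X - Polynomial.C (X l : MvPolynomial (Fin n) F))).coeff j
            * (X i) ^ j := by
  set T := ∏ l : Fin n, (Polynomial.X - Polynomial.C (X l : MvPolynomial (Fin n) F)) with hT
  have h0 : T.eval (X i) = 0 := by
    rw [hT, Polynomial.eval_prod]
    refine Finset.prod_eq_zero (Finset.mem_univ i) ?_
    simp
  have h1 : T.eval (X i) = ∑ j ∈ Finset.range (n + 1), T.coeff j * (X i) ^ j := by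
    rw [Polynomial.eval_eq_sum_range]
    rw [Tid_natDegree]
  rw [Finset.sum_range_succ] at h1
  have h2 : T.coeff n = 1 := by
    have := (Tid_monic F n).coeff_natDegree
    rwa [Tid_natDegree] at this
  rw [h2, one_mul, h0] at h1
  linear_combination -h1

/-- degree bound for a monomial -/
lemma dle_prod_X (β : Fin n →₀ ℕ) :
    ((β.prod fun i e => (X i : MvPolynomial (Fin n) F) ^ e)).totalDegree
      ≤ β.sum fun _ e => e := by
  simp only [Finsupp.prod, Finsupp.sum]
  refine (totalDegree_finset_prod _ _).trans ?_
  refine Finset.sum_le_sum fun i _ => ?_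
  calc ((X i : MvPolynomial (Fin n) F) ^ β i).totalDegree
      ≤ β i * (X i : MvPolynomial (Fin n) F).totalDegree := totalDegree_pow _ _
    _ ≤ β i := by rw [totalDegree_X]; omega

/-- Module-finiteness of the polynomial ring over the subalgebra generated by the `cc B k`. -/
lemma module_finite_cc (B : Matrix (Fin n) (Fin n) F) :
    letI alg : Algebra (MvPolynomial (Fin n) F) (MvPolynomial (Fin n) F) :=
      ((aeval (cc B) : MvPolynomial (Fin n) F →ₐ[F] MvPolynomial (Fin n) F)
        : MvPolynomial (Fin n) F →+* MvPolynomial (Fin n) F).toAlgebra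
    @Module.Finite (MvPolynomial (Fin n) F) (MvPolynomial (Fin n) F) _ _ alg.toModule := by
  letI alg : Algebra (MvPolynomial (Fin n) F) (MvPolynomial (Fin n) F) :=
      ((aeval (cc B) : MvPolynomial (Fin n) F →ₐ[F] MvPolynomial (Fin n) F)
        : MvPolynomial (Fin n) F →+* MvPolynomial (Fin n) F).toAlgebra
  classical
  set G : Finset (MvPolynomial (Fin n) F) :=
    Finset.image (fun v : Fin n → Fin n => ∏ i : Fin n, (X i : MvPolynomial (Fin n) F) ^ (v i : ℕ))
      Finset.univ with hG
  letI : Module (MvPolynomial (Fin n) F) (MvPolynomial (Fin n) F) := alg.toModule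
  set W : Submodule (MvPolynomial (Fin n) F) (MvPolynomial (Fin n) F) :=
    Submodule.span (MvPolynomial (Fin n) F) (G : Set (MvPolynomial (Fin n) F)) with hW
  have hsmul : ∀ (y s : MvPolynomial (Fin n) F), s ∈ W → (aeval (cc B) y) * s ∈ W := by
    intro y s hs
    exact W.smul_mem y hs
  have key : ∀ d : ℕ, ∀ f : MvPolynomial (Fin n) F, f.totalDegree ≤ d → f ∈ W := by
    intro d
    induction d using Nat.strong_induction_on with
    | _ d ih =>
      -- first, monomials
      have hmono : ∀ α : Fin n →₀ ℕ, (α.sum fun _ e => e) ≤ d →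
          (α.prod fun i e => (X i : MvPolynomial (Fin n) F) ^ e) ∈ W := by
        intro α hα
        by_cases hcase : ∀ i, α i < n
        · refine Submodule.subset_span ?_
          refine Finset.mem_coe.mpr (Finset.mem_image.mpr
            ⟨fun i => ⟨α i, hcase i⟩, Finset.mem_univ _, ?_⟩)
          rw [Finsupp.prod_fintype _ _ fun i => pow_zero _]
        · push_neg at hcase
          obtain ⟨i, hi⟩ := hcase
          set β := α - Finsupp.single i n with hβ
          have hαβ : α = β + Finsupp.single i n := by
            ext j
            rcases eq_or_ne j i with rfl | hne
            · simp [hβ, Finsupp.sub_apply, Finsupp.single_apply]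
              omega
            · simp [hβ, Finsupp.sub_apply, Finsupp.single_apply, hne.symm, if_neg]
          have hsum : (α.sum fun _ e => e) = (β.sum fun _ e => e) + n := by
            conv_lhs => rw [hαβ]
            rw [Finsupp.sum_add_index' (fun _ => rfl) (fun _ _ _ => rfl)]
            rw [Finsupp.sum_single_index rfl]
          have hprodα : (α.prod fun i e => (X i : MvPolynomial (Fin n) F) ^ e)
              = (X i : MvPolynomial (Fin n) F) ^ n * (β.prod fun i e => X i ^ e) := by
            conv_lhs => rw [hαβ]
            rw [Finsupp.prod_add_index (fun _ _ => pow_zero _) (fun _ _ _ _ => pow_add _ _ _)]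
            rw [show ((Finsupp.single i n).prod fun l e => (X l : MvPolynomial (Fin n) F) ^ e)
              = X i ^ n from Finsupp.prod_single_index (pow_zero _)]
            ring
          set g0 := fun (j : ℕ) => (X i : MvPolynomial (Fin n) F) ^ j * (β.prod fun l e => X l ^ e)
            with hg0
          have hdn : n ≤ d := by
            have : n ≤ α.sum fun _ e => e := by omega
            omega
          have hg0deg : ∀ j : ℕ, (g0 j).totalDegree ≤ j + (β.sum fun _ e => e) := by
            intro j
            refine (totalDegree_mul _ _).trans ?_
            have h1 : ((X i : MvPolynomial (Fin n) F) ^ j).totalDegree ≤ j := by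
              refine (totalDegree_pow _ _).trans ?_
              rw [totalDegree_X]
              omega
            exact Nat.add_le_add h1 (dle_prod_X β)
          have hg0mem : ∀ j : ℕ, j < n → g0 j ∈ W := by
            intro j hj
            refine ih (d - 1) (by omega) _ ?_
            refine (hg0deg j).trans ?_
            omega
          rw [hprodα, Xi_pow, neg_mul, Finset.sum_mul]
          refine Submodule.neg_mem _ (Submodule.sum_mem _ fun j hj => ?_)
          have hjn : j < n := Finset.mem_range.mp hj
          set m := n - j with hm
          set k : Fin n := ⟨m - 1, by omega⟩ with hk
          have hkm : (k : ℕ) + 1 = m := by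
            simp only [hk]
            omega
          have hcoeff : (∏ l : Fin n,
              (Polynomial.X - Polynomial.C (X l : MvPolynomial (Fin n) F))).coeff j
              = (-1) ^ m * esymm (Fin n) F m := by
            have := vieta_coeff (m := m) F n (by omega)
            rwa [show n - m = j by omega] at this
          have heskm : esymm (Fin n) F m = es F n k := by
            rw [es, hkm]
          have h1 : (cc B k) * g0 j ∈ W := by
            have := hsmul (X k) (g0 j) (hg0mem j hjn)
            rwa [aeval_X] at this
          have h2 : (cc B k - es F n k) * g0 j ∈ W := by
            rcases dlt_cc_sub_es B k with h0 | hlt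
            · rw [h0, zero_mul]
              exact Submodule.zero_mem _
            · refine ih (d - 1) (by omega) _ ?_
              refine (totalDegree_mul _ _).trans ?_
              have := hg0deg j
              rw [hkm] at hlt
              omega
          have hterm : (∏ l : Fin n,
                (Polynomial.X - Polynomial.C (X l : MvPolynomial (Fin n) F))).coeff j
                  * (X i : MvPolynomial (Fin n) F) ^ j * (β.prod fun l e => X l ^ e)
              = (-1 : MvPolynomial (Fin n) F) ^ m * ((cc B k) * g0 j)
                - (-1 : MvPolynomial (Fin n) F) ^ m * ((cc B k - es F n k) * g0 j) := by
            rw [hcoeff, heskm, hg0]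
            ring
          rw [hterm]
          have hneg : ∀ s : MvPolynomial (Fin n) F, s ∈ W →
              (-1 : MvPolynomial (Fin n) F) ^ m * s ∈ W := by
            intro s hs
            have := hsmul ((-1) ^ m) s hs
            rwa [map_pow, map_neg, map_one] at this
          exact Submodule.sub_mem _ (hneg _ h1) (hneg _ h2)
      intro f hf
      rw [f.as_sum]
      refine Submodule.sum_mem _ fun α hα => ?_
      have hαd : (α.sum fun _ e => e) ≤ d := le_trans (le_totalDegree hα) hf
      rw [monomial_eq]
      have := hsmul (C (coeff α f)) _ (hmono α hαd)
      rwa [aeval_C, algebraMap_eq] at this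
  refine ⟨⟨G, ?_⟩⟩
  rw [eq_top_iff]
  intro f _
  exact key f.totalDegree f le_rfl


lemma exists_eval [IsAlgClosed F] (B : Matrix (Fin n) (Fin n) F) (μ : Fin n → F) :
    ∃ a : Fin n → F, ∀ k, eval a (cc B k) = μ k := by
  classical
  letI alg : Algebra (MvPolynomial (Fin n) F) (MvPolynomial (Fin n) F) :=
      ((aeval (cc B) : MvPolynomial (Fin n) F →ₐ[F] MvPolynomial (Fin n) F)
        : MvPolynomial (Fin n) F →+* MvPolynomial (Fin n) F).toAlgebra
  haveI hfin : @Module.Finite (MvPolynomial (Fin n) F) (MvPolynomial (Fin n) F) _ _ alg.toModule :=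
    module_finite_cc B
  haveI hint : Algebra.IsIntegral (MvPolynomial (Fin n) F) (MvPolynomial (Fin n) F) :=
    Algebra.IsIntegral.of_finite _ _
  set m0 : Ideal (MvPolynomial (Fin n) F) :=
    RingHom.ker (eval μ : MvPolynomial (Fin n) F →+* F) with hm0
  haveI hm0max : m0.IsMaximal :=
    RingHom.ker_isMaximal_of_surjective _ (fun x => ⟨C x, eval_C _⟩)
  have hker : RingHom.ker (algebraMap (MvPolynomial (Fin n) F) (MvPolynomial (Fin n) F)) ≤ m0 := by
    have hbot : RingHom.ker (algebraMap (MvPolynomial (Fin n) F) (MvPolynomial (Fin n) F)) = ⊥ :=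
      (RingHom.injective_iff_ker_eq_bot _).mp (aeval_cc_injective B)
    rw [hbot]
    exact bot_le
  obtain ⟨Q, hQmax, hQcomap⟩ := Ideal.exists_ideal_over_maximal_of_isIntegral m0 hker
  obtain ⟨a, ha⟩ := (MvPolynomial.isMaximal_iff_eq_vanishingIdeal_singleton (I := Q)).mp hQmax
  refine ⟨a, fun k => ?_⟩
  have hmem : (X k - C (μ k) : MvPolynomial (Fin n) F) ∈ m0 := by
    rw [hm0, RingHom.mem_ker, map_sub, eval_X, eval_C, sub_self]
  have hmem2 : (algebraMap (MvPolynomial (Fin n) F) (MvPolynomial (Fin n) F))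
      (X k - C (μ k)) ∈ Q := by
    rw [← hQcomap] at hmem
    exact hmem
  have hval : (algebraMap (MvPolynomial (Fin n) F) (MvPolynomial (Fin n) F))
      (X k - C (μ k)) = cc B k - C (μ k) := by
    show aeval (cc B) (X k - C (μ k)) = cc B k - C (μ k)
    rw [map_sub, aeval_X, aeval_C, algebraMap_eq]
  rw [hval, ha] at hmem2
  have h0 := (mem_vanishingIdeal_singleton_iff a _).mp hmem2
  rw [map_sub, aeval_C, Algebra.algebraMap_self, RingHom.id_apply] at h0
  exact sub_eq_zero.mp h0

end Main

end Friedland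

open Polynomial

theorem friedland_diagonal_completion (F : Type*) [Field F] [IsAlgClosed F]
    (n : ℕ) (B : Matrix (Fin n) (Fin n) F) (lam : Fin n → F) :
    ∃ a : Fin n → F,
      (Matrix.of fun i j => if i = j then a i else B i j).charpoly =
        ∏ i, (X - C (lam i)) := by
  classical
  set T : Polynomial F := ∏ i, (X - C (lam i)) with hT
  have hTmonic : T.Monic := monic_prod_of_monic _ _ fun i _ => monic_X_sub_C _
  have hTdeg : T.natDegree = n := by
    rw [hT, natDegree_prod _ _ fun i _ => (monic_X_sub_C (lam i)).ne_zero]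
    simp [natDegree_X_sub_C]
  set μ : Fin n → F := fun k => (-1) ^ ((k : ℕ) + 1) * T.coeff (n - ((k : ℕ) + 1)) with hμ
  obtain ⟨a, ha⟩ := Friedland.exists_eval B μ
  refine ⟨a, ?_⟩
  have hmat : (Matrix.of fun i j => if i = j then a i else B i j)
      = (Friedland.Mgen B).map (MvPolynomial.eval a) := by
    ext i j
    by_cases h : i = j <;> simp [Friedland.Mgen, Matrix.map_apply, h]
  rw [hmat, Matrix.charpoly_map]
  have hchieq : (Friedland.Mgen B).charpoly = Friedland.chi B := rfl
  rw [hchieq]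
  have hchimonic : (Friedland.chi B).Monic := (Friedland.Mgen B).charpoly_monic
  have hchideg : (Friedland.chi B).natDegree = n := by
    rw [Friedland.chi, Matrix.charpoly_natDegree_eq_dim]
    simp
  ext j
  rcases lt_trichotomy j n with hj | rfl | hj
  · rw [Polynomial.coeff_map]
    set m := n - j with hm
    have hmn : 1 ≤ m ∧ m ≤ n := by omega
    set k : Fin n := ⟨m - 1, by omega⟩ with hk
    have hkm : (k : ℕ) + 1 = m := by
      simp only [hk]
      omega
    have hccj : (Friedland.chi B).coeff j = (-1) ^ m * Friedland.cc B k := by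
      rw [Friedland.cc, hkm, show n - m = j by omega, ← mul_assoc, ← mul_pow]
      norm_num
    have hμk : μ k = (-1) ^ m * T.coeff j := by
      simp only [hμ]
      rw [hkm, show n - m = j by omega]
    rw [hccj, map_mul, ha k, hμk, map_pow, map_neg, map_one, ← mul_assoc, ← mul_pow]
    norm_num
  · have h1 : (Friedland.chi B).coeff j = 1 := by
      have := hchimonic.coeff_natDegree
      rwa [hchideg] at this
    have h2 : T.coeff j = 1 := by
      have := hTmonic.coeff_natDegree
      rwa [hTdeg] at this
    rw [Polynomial.coeff_map, h1, map_one, h2]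
  · rw [Polynomial.coeff_eq_zero_of_natDegree_lt, Polynomial.coeff_eq_zero_of_natDegree_lt]
    · omega
    · exact lt_of_le_of_lt natDegree_map_le (by omega)
end
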